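/- arXiv:1506.07010 — 4 statements merged into one kernel-verified Lean document; each statement's English description precedes it below -/
import Mathlib

section
/- For every n ≥ 1 and k ≥ 0, the functions S_{n,k} satisfy on the half-plane {z ∈ ℂ : Re z > −1/2} the recurrence S_{n,k+1}(z) = (z(1+z)/n) · S_{n,k}′(z) + ((nz+k)/n) · S_{n,k}(z), where S_{n,k}′ denotes the complex derivative. -/
open MeasureTheory

/-- The Baskakov basis function `b_{n,v}(z) = C(n+v−1, v) · z^v / (1+z)^{n+v}`. -/
noncomputable def baskakovBasis (n v : ℕ) (z : ℂ) : ℂ :=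
  ((n + v - 1).choose v : ℂ) * z ^ v / (1 + z) ^ (n + v)

/-- The `k`-th moment of the Szász basis function `s_{n,v}`:
`∫_0^∞ e^{−nt} (nt)^v / v! · t^k dt`. -/
noncomputable def szaszMoment (n v k : ℕ) : ℝ :=
  ∫ t in Set.Ioi (0 : ℝ), Real.exp (-((n : ℝ) * t)) * ((n : ℝ) * t) ^ v / (v.factorial : ℝ) * t ^ k

/-- `S_{n,k}(z) = n · Σ_{v=1}^∞ b_{n,v}(z) · ∫_0^∞ s_{n,v−1}(t) t^k dt + (1+z)^{−n} · 0^k`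
(the last term appearing only for `k = 0`, since `0^0 = 1` and `0^k = 0` for `k ≥ 1`). -/
noncomputable def S (n k : ℕ) (z : ℂ) : ℂ :=
  (n : ℂ) * ∑' v : ℕ, baskakovBasis n (v + 1) z * (szaszMoment n v k : ℂ)
    + (1 + z) ^ (-(n : ℤ)) * (0 : ℂ) ^ k

/- ### Auxiliary lemmas -/

lemma szaszMoment_eq (n v k : ℕ) (hn : 1 ≤ n) :
    szaszMoment n v k = ((v+k).factorial : ℝ) / (v.factorial * (n:ℝ)^(k+1)) := by
  have hn0 : (0:ℝ) < n := by exact_mod_cast hn.trans_lt' zero_lt_one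
  unfold szaszMoment
  have hcong : ∀ t ∈ Set.Ioi (0:ℝ),
      Real.exp (-((n:ℝ)*t)) * ((n:ℝ)*t)^v / (v.factorial : ℝ) * t^k
        = ((n:ℝ)^v / v.factorial) * (t ^ (((v+k+1 : ℕ) : ℝ) - 1) * Real.exp (-((n:ℝ)*t))) := by
    intro t ht
    rw [show (((v+k+1 : ℕ):ℝ) - 1) = ((v+k : ℕ) : ℝ) by push_cast; ring,
      Real.rpow_natCast]
    rw [mul_pow]
    push_cast
    ring
  rw [setIntegral_congr_fun measurableSet_Ioi hcong, integral_const_mul,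
    Real.integral_rpow_mul_exp_neg_mul_Ioi (by positivity) hn0]
  rw [show (((v+k+1 : ℕ):ℝ)) = ((v+k : ℕ) : ℝ) + 1 by push_cast; ring,
    Real.Gamma_nat_eq_factorial]
  rw [show ((v+k:ℕ):ℝ)+1 = ((v+k+1:ℕ):ℝ) by push_cast; ring, Real.rpow_natCast]
  have h1 : (v.factorial : ℝ) ≠ 0 := by positivity
  have h2 : (n:ℝ) ≠ 0 := hn0.ne'
  field_simp
  ring_nf
  field_simp
  rw [one_div, inv_pow, inv_pow]
  field_simp

/-- Explicit derivative of the Baskakov basis function. -/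
noncomputable def bB' (n m : ℕ) (z : ℂ) : ℂ :=
  ((n+m).choose (m+1) : ℂ) * (((m:ℂ)+1) * z^m * (1+z) - ((n:ℂ)+(m:ℂ)+1) * z^(m+1)) / (1+z)^(n+m+2)

lemma baskakov_eq (n m : ℕ) :
    baskakovBasis n (m+1) = fun w : ℂ => ((n+m).choose (m+1) : ℂ) * w^(m+1) / (1+w)^(n+m+1) := by
  funext w
  unfold baskakovBasis
  rw [show n + (m+1) - 1 = n+m from by omega, show n + (m+1) = n+m+1 from by omega]

lemma baskakov_hasDerivAt (n m : ℕ) {z : ℂ} (hz : (1:ℂ)+z ≠ 0) :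
    HasDerivAt (baskakovBasis n (m+1)) (bB' n m z) z := by
  rw [baskakov_eq]
  have hpow : ((1+z)^(n+m+1) : ℂ) ≠ 0 := pow_ne_zero _ hz
  have h1 : HasDerivAt (fun w : ℂ => ((n+m).choose (m+1) : ℂ) * w^(m+1))
      (((n+m).choose (m+1) : ℂ) * (((m:ℕ)+1 : ℕ) * z^m)) z := by
    simpa using (hasDerivAt_pow (m+1) z).const_mul (((n+m).choose (m+1) : ℂ))
  have h2 : HasDerivAt (fun w : ℂ => (1+w)^(n+m+1))
      (((n+m+1 : ℕ) : ℂ) * (1+z)^(n+m) * 1) z := by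
    simpa using ((hasDerivAt_id z).const_add (1:ℂ)).fun_pow (n+m+1)
  have h := h1.div h2 hpow
  refine h.congr_deriv ?_
  unfold bB'
  field_simp
  push_cast
  ring

lemma baskakov_deriv_rel (n m : ℕ) {z : ℂ} (hz : (1:ℂ)+z ≠ 0) :
    z * (1+z) * bB' n m z = baskakovBasis n (m+1) z * (((m:ℂ)+1) - (n:ℂ)*z) := by
  rw [baskakov_eq]
  unfold bB'
  field_simp
  ring

lemma norm_lt_of_re {w : ℂ} (hw : -1/2 < w.re) : ‖w‖ < ‖1+w‖ := by
  have h2 : ‖w‖^2 < ‖1+w‖^2 := by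
    rw [Complex.sq_norm, Complex.sq_norm]
    simp only [Complex.normSq_apply, Complex.add_re, Complex.add_im, Complex.one_re,
      Complex.one_im]
    nlinarith
  exact lt_of_pow_lt_pow_left₀ 2 (norm_nonneg _) h2

lemma half_lt_norm {w : ℂ} (hw : -1/2 < w.re) : 1/2 < ‖1+w‖ := by
  have h1 : (1+w).re ≤ ‖1+w‖ := Complex.re_le_norm _
  have : (1+w).re = 1 + w.re := by simp
  linarith

lemma one_add_ne {w : ℂ} (hw : -1/2 < w.re) : (1:ℂ)+w ≠ 0 := by
  intro h
  have := half_lt_norm hw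
  rw [h] at this
  norm_num at this

lemma baskakov_norm_le (n m : ℕ) {w : ℂ} (hw : -1/2 < w.re) {Q : ℝ}
    (hQ : ‖w‖/‖1+w‖ ≤ Q) :
    ‖baskakovBasis n (m+1) w‖ ≤ ((n+m).choose (m+1) : ℝ) * Q^(m+1) * 2^n := by
  have hd : (0:ℝ) < ‖1+w‖ := lt_trans (by norm_num) (half_lt_norm hw)
  have hQ0' : (0:ℝ) ≤ Q := le_trans (by positivity) hQ
  rw [baskakov_eq]
  simp only [norm_div, norm_mul, norm_pow, Complex.norm_natCast]
  have e : ((n+m).choose (m+1) : ℝ) * ‖w‖^(m+1) / ‖1+w‖^(n+m+1)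
      = ((n+m).choose (m+1) : ℝ) * ((‖w‖/‖1+w‖)^(m+1) * (1/‖1+w‖)^n) := by
    rw [div_pow, div_pow, one_pow, show n+m+1 = (m+1)+n from by ring, pow_add]
    field_simp
    ring
  rw [e]
  have h1 : (‖w‖/‖1+w‖)^(m+1) ≤ Q^(m+1) :=
    pow_le_pow_left₀ (by positivity) hQ _
  have h2 : (1/‖1+w‖)^n ≤ (2:ℝ)^n := by
    apply pow_le_pow_left₀ (by positivity)
    rw [div_le_iff₀ hd]
    nlinarith [half_lt_norm hw]
  calc ((n+m).choose (m+1) : ℝ) * ((‖w‖/‖1+w‖)^(m+1) * (1/‖1+w‖)^n)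
      ≤ ((n+m).choose (m+1) : ℝ) * (Q^(m+1) * 2^n) := by
        apply mul_le_mul_of_nonneg_left _ (by positivity)
        exact mul_le_mul h1 h2 (by positivity) (by positivity)
    _ = ((n+m).choose (m+1) : ℝ) * Q^(m+1) * 2^n := by ring

lemma nat_fact_le (m k : ℕ) : (m+k).factorial ≤ m.factorial * ((m+1)*(k+1))^k := by
  calc (m+k).factorial = m.factorial * (m+1).ascFactorial k :=
        (Nat.factorial_mul_ascFactorial m k).symm
    _ ≤ m.factorial * (m+k)^k :=
        Nat.mul_le_mul_left _ (Nat.ascFactorial_le_pow_add m k)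
    _ ≤ m.factorial * ((m+1)*(k+1))^k := by
        apply Nat.mul_le_mul_left
        apply Nat.pow_le_pow_left
        nlinarith

lemma nat_choose_le (n m : ℕ) (hn : 1 ≤ n) : (n+m).choose (m+1) ≤ (n*(m+1))^n := by
  have h1 : (n+m).choose (m+1) = (n+m).choose (n-1) := by
    rw [← Nat.choose_symm (by omega : m+1 ≤ n+m)]
    congr 1
    omega
  rw [h1]
  calc (n+m).choose (n-1) ≤ (n+m)^(n-1) := Nat.choose_le_pow _ _
    _ ≤ (n*(m+1))^(n-1) := Nat.pow_le_pow_left (by nlinarith) _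
    _ ≤ (n*(m+1))^n := Nat.pow_le_pow_right (by positivity) (by omega)

/-- For `n ≥ 1`, `k ≥ 0` and `Re z > −1/2`, the recurrence
`S_{n,k+1}(z) = (z(1+z)/n) · S_{n,k}′(z) + ((nz+k)/n) · S_{n,k}(z)` holds. -/
theorem S_recurrence (n : ℕ) (hn : 1 ≤ n) (k : ℕ) (z : ℂ) (hz : -1/2 < z.re) :
    S n (k + 1) z
      = (z * (1 + z) / (n : ℂ)) * deriv (S n k) z + (((n : ℂ) * z + (k : ℂ)) / (n : ℂ)) * S n k z := by
  have hn0 : (0:ℝ) < n := by exact_mod_cast hn.trans_lt' zero_lt_one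
  have hnC : (n:ℂ) ≠ 0 := by exact_mod_cast hn0.ne'
  have h1z : (1:ℂ)+z ≠ 0 := one_add_ne hz
  -- the ball
  set r : ℝ := (2*z.re+1)/4 with hr_def
  have hr : 0 < r := by rw [hr_def]; linarith
  have hre : ∀ w ∈ Metric.closedBall z r, -1/2 < w.re := by
    intro w hw
    have h1 : |(w-z).re| ≤ ‖w-z‖ := Complex.abs_re_le_norm _
    have h2 : ‖w-z‖ ≤ r := mem_closedBall_iff_norm.1 hw
    have h3 : (w-z).re = w.re - z.re := by simp
    rw [h3] at h1
    have := abs_le.1 (h1.trans h2)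
    rw [hr_def] at this
    linarith [this.1]
  -- the sup Q
  have hKne : (Metric.closedBall z r).Nonempty := ⟨z, Metric.mem_closedBall_self hr.le⟩
  have hcont : ContinuousOn (fun w : ℂ => ‖w‖/‖1+w‖) (Metric.closedBall z r) := by
    apply ContinuousOn.div continuous_norm.continuousOn
      ((continuous_const.add continuous_id).norm.continuousOn)
    intro w hw
    exact (lt_trans (by norm_num) (half_lt_norm (hre w hw))).ne'
  obtain ⟨w0, hw0K, hmax⟩ := (isCompact_closedBall z r).exists_isMaxOn hKne hcont
  set Q : ℝ := ‖w0‖/‖1+w0‖ with hQ_def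
  have hQ0 : 0 ≤ Q := by positivity
  have hQ1 : Q < 1 := by
    rw [hQ_def, div_lt_one (lt_trans (by norm_num) (half_lt_norm (hre w0 hw0K)))]
    exact norm_lt_of_re (hre w0 hw0K)
  -- the summable bound
  set u : ℕ → ℝ := fun m => ((n+m).choose (m+1) : ℝ) * Q^(m+1) * 2^n
      * ((m+k).factorial / (m.factorial * (n:ℝ)^(k+1))) with hu_def
  have hu : Summable u := by
    have hg : Summable (fun m : ℕ => ((m:ℝ)+1)^(n+k) * Q^(m+1)) := by
      have h := summable_pow_mul_geometric_of_norm_lt_one (n+k)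
        (r := Q) (by rwa [Real.norm_eq_abs, abs_of_nonneg hQ0])
      have h2 := (summable_nat_add_iff 1).2 h
      apply h2.congr
      intro m
      push_cast
      ring
    apply Summable.of_nonneg_of_le (fun m => by positivity)
      (fun m => ?_) (hg.mul_left ((n:ℝ)^n * 2^n * ((k:ℝ)+1)^k))
    -- u m ≤ B * ((m+1)^(n+k) * Q^(m+1))
    have hA : ((m+k).factorial : ℝ) / (m.factorial * (n:ℝ)^(k+1))
        ≤ ((m:ℝ)+1)^k * ((k:ℝ)+1)^k := by
      rw [div_le_iff₀ (by positivity)]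
      have hf : ((m+k).factorial : ℝ) ≤ (m.factorial : ℝ) * (((m:ℝ)+1)*((k:ℝ)+1))^k := by
        exact_mod_cast nat_fact_le m k
      have hn1 : (1:ℝ) ≤ (n:ℝ)^(k+1) := one_le_pow₀ (by exact_mod_cast hn)
      calc ((m+k).factorial : ℝ) ≤ (m.factorial : ℝ) * (((m:ℝ)+1)*((k:ℝ)+1))^k := hf
        _ = ((m:ℝ)+1)^k * ((k:ℝ)+1)^k * ((m.factorial:ℝ) * 1) := by rw [mul_pow]; ring
        _ ≤ ((m:ℝ)+1)^k * ((k:ℝ)+1)^k * ((m.factorial:ℝ) * (n:ℝ)^(k+1)) := by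
            apply mul_le_mul_of_nonneg_left _ (by positivity)
            apply mul_le_mul_of_nonneg_left hn1 (by positivity)
    have hC : ((n+m).choose (m+1) : ℝ) ≤ (n:ℝ)^n * ((m:ℝ)+1)^n := by
      have := nat_choose_le n m hn
      calc ((n+m).choose (m+1) : ℝ) ≤ (((n*(m+1))^n : ℕ) : ℝ) := by exact_mod_cast this
        _ = (n:ℝ)^n * ((m:ℝ)+1)^n := by push_cast; rw [mul_pow]
    calc u m = ((n+m).choose (m+1) : ℝ) * Q^(m+1) * 2^n
          * ((m+k).factorial / (m.factorial * (n:ℝ)^(k+1))) := rfl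
      _ ≤ ((n:ℝ)^n * ((m:ℝ)+1)^n) * Q^(m+1) * 2^n * (((m:ℝ)+1)^k * ((k:ℝ)+1)^k) := by
          have hb0 : (0:ℝ) ≤ ((n+m).choose (m+1) : ℝ) * Q^(m+1) * 2^n := by positivity
          apply mul_le_mul _ hA (by positivity) (by positivity)
          apply mul_le_mul_of_nonneg_right _ (by positivity)
          exact mul_le_mul_of_nonneg_right hC (by positivity)
      _ = (n:ℝ)^n * 2^n * ((k:ℝ)+1)^k * (((m:ℝ)+1)^(n+k) * Q^(m+1)) := by
          rw [pow_add]
          ring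
  -- the uniform bound over the ball
  have hF_le : ∀ (m : ℕ), ∀ w ∈ Metric.ball z r,
      ‖baskakovBasis n (m+1) w * ((szaszMoment n m k : ℝ) : ℂ)‖ ≤ u m := by
    intro m w hw
    have hwK : w ∈ Metric.closedBall z r := Metric.ball_subset_closedBall hw
    have hwre := hre w hwK
    rw [norm_mul, Complex.norm_real, Real.norm_eq_abs, szaszMoment_eq n m k hn,
      abs_of_nonneg (by positivity)]
    have hb := baskakov_norm_le n m hwre (hmax hwK)
    calc ‖baskakovBasis n (m+1) w‖ * ((m+k).factorial / (m.factorial * (n:ℝ)^(k+1)))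
        ≤ (((n+m).choose (m+1) : ℝ) * Q^(m+1) * 2^n)
            * ((m+k).factorial / (m.factorial * (n:ℝ)^(k+1))) :=
          mul_le_mul_of_nonneg_right hb (by positivity)
      _ = u m := rfl
  have hzU : z ∈ Metric.ball z r := Metric.mem_ball_self hr
  have hdiff : ∀ m : ℕ, DifferentiableOn ℂ
      (fun w => baskakovBasis n (m+1) w * ((szaszMoment n m k : ℝ) : ℂ)) (Metric.ball z r) := by
    intro m w hw
    exact ((baskakov_hasDerivAt n m (one_add_ne
      (hre w (Metric.ball_subset_closedBall hw)))).mul_const _).differentiableAt.differentiableWithinAt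
  have hds := Complex.hasSum_deriv_of_summable_norm hu hdiff Metric.isOpen_ball hF_le hzU
  have hgdiff : DifferentiableAt ℂ
      (fun w : ℂ => ∑' m : ℕ, baskakovBasis n (m+1) w * ((szaszMoment n m k : ℝ) : ℂ)) z :=
    (Complex.differentiableOn_tsum_of_summable_norm hu hdiff Metric.isOpen_ball
      hF_le).differentiableAt (Metric.isOpen_ball.mem_nhds hzU)
  have hDm : ∀ m : ℕ, deriv (fun w => baskakovBasis n (m+1) w * ((szaszMoment n m k : ℝ) : ℂ)) z
      = bB' n m z * ((szaszMoment n m k : ℝ) : ℂ) :=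
    fun m => ((baskakov_hasDerivAt n m h1z).mul_const _).deriv
  have hdg : deriv (fun w : ℂ => ∑' m : ℕ, baskakovBasis n (m+1) w * ((szaszMoment n m k : ℝ) : ℂ)) z
      = ∑' m : ℕ, bB' n m z * ((szaszMoment n m k : ℝ) : ℂ) := by
    rw [← hds.tsum_eq]
    exact tsum_congr hDm
  have hsumD : Summable (fun m : ℕ => bB' n m z * ((szaszMoment n m k : ℝ) : ℂ)) :=
    hds.summable.congr hDm
  have hsumF : Summable (fun m : ℕ => baskakovBasis n (m+1) z * ((szaszMoment n m k : ℝ) : ℂ)) :=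
    Summable.of_norm_bounded hu (fun m => hF_le m z hzU)
  -- derivative of S n k
  have hh : HasDerivAt (fun w : ℂ => (1+w)^(-(n:ℤ)))
      (((-(n:ℤ)) : ℂ) * (1+z)^(-(n:ℤ)-1)) z := by
    have h0 : HasDerivAt (fun w : ℂ => 1+w) 1 z := by
      simpa using (hasDerivAt_id z).const_add (1:ℂ)
    have h1 := hasDerivAt_zpow (-(n:ℤ)) (1+z) (Or.inl h1z)
    have h2 := h1.comp z h0
    rw [mul_one] at h2
    exact_mod_cast h2
  have hS_deriv : deriv (S n k) z
      = (n:ℂ) * (∑' m : ℕ, bB' n m z * ((szaszMoment n m k : ℝ) : ℂ))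
        + (((-(n:ℤ)) : ℂ) * (1+z)^(-(n:ℤ)-1)) * (0:ℂ)^k := by
    have h2 : HasDerivAt (S n k)
        ((n:ℂ) * deriv (fun w : ℂ => ∑' m : ℕ, baskakovBasis n (m+1) w * ((szaszMoment n m k : ℝ) : ℂ)) z
          + (((-(n:ℤ)) : ℂ) * (1+z)^(-(n:ℤ)-1)) * (0:ℂ)^k) z := by
      exact (hgdiff.hasDerivAt.const_mul ((n:ℂ))).add (hh.mul_const ((0:ℂ)^k))
    rw [h2.deriv, hdg]
  -- the moment relation
  have hM : ∀ m : ℕ, (n:ℂ) * ((szaszMoment n m (k+1) : ℝ) : ℂ)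
      = ((m:ℂ)+(k:ℂ)+1) * ((szaszMoment n m k : ℝ) : ℂ) := by
    intro m
    have hr : (n:ℝ) * szaszMoment n m (k+1) = ((m:ℝ)+(k:ℝ)+1) * szaszMoment n m k := by
      rw [szaszMoment_eq n m (k+1) hn, szaszMoment_eq n m k hn]
      have hfac : ((m+(k+1)).factorial : ℝ) = ((m:ℝ)+(k:ℝ)+1) * ((m+k).factorial : ℝ) := by
        rw [show m+(k+1) = (m+k)+1 from rfl, Nat.factorial_succ]
        push_cast
        ring
      rw [hfac]
      have h1 : (m.factorial : ℝ) ≠ 0 := by positivity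
      have h2 : (n:ℝ) ≠ 0 := hn0.ne'
      field_simp
      ring
    exact_mod_cast congrArg (Complex.ofReal) hr
  -- the termwise identity
  have hterm : ∀ m : ℕ, (n:ℂ) * (baskakovBasis n (m+1) z * ((szaszMoment n m (k+1) : ℝ) : ℂ))
      = (z*(1+z)/(n:ℂ)) * ((n:ℂ) * (bB' n m z * ((szaszMoment n m k : ℝ) : ℂ)))
        + (((n:ℂ)*z+(k:ℂ))/(n:ℂ)) * ((n:ℂ) * (baskakovBasis n (m+1) z * ((szaszMoment n m k : ℝ) : ℂ))) := by
    intro m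
    have h1 := baskakov_deriv_rel n m h1z
    have h2 := hM m
    calc (n:ℂ) * (baskakovBasis n (m+1) z * ((szaszMoment n m (k+1) : ℝ) : ℂ))
        = baskakovBasis n (m+1) z * ((n:ℂ) * ((szaszMoment n m (k+1) : ℝ) : ℂ)) := by ring
      _ = baskakovBasis n (m+1) z * (((m:ℂ)+(k:ℂ)+1) * ((szaszMoment n m k : ℝ) : ℂ)) := by
          rw [h2]
      _ = (baskakovBasis n (m+1) z * (((m:ℂ)+1) - (n:ℂ)*z)) * ((szaszMoment n m k : ℝ) : ℂ)
            + ((n:ℂ)*z+(k:ℂ)) * (baskakovBasis n (m+1) z * ((szaszMoment n m k : ℝ) : ℂ)) := by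
          ring
      _ = (z * (1+z) * bB' n m z) * ((szaszMoment n m k : ℝ) : ℂ)
            + ((n:ℂ)*z+(k:ℂ)) * (baskakovBasis n (m+1) z * ((szaszMoment n m k : ℝ) : ℂ)) := by
          rw [h1]
      _ = (z*(1+z)/(n:ℂ)) * ((n:ℂ) * (bB' n m z * ((szaszMoment n m k : ℝ) : ℂ)))
            + (((n:ℂ)*z+(k:ℂ))/(n:ℂ)) * ((n:ℂ) * (baskakovBasis n (m+1) z * ((szaszMoment n m k : ℝ) : ℂ))) := by
          field_simp
  -- summing the termwise identity
  have hsum_eq : (n:ℂ) * ∑' m : ℕ, baskakovBasis n (m+1) z * ((szaszMoment n m (k+1) : ℝ) : ℂ)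
      = (z*(1+z)/(n:ℂ)) * ((n:ℂ) * ∑' m : ℕ, bB' n m z * ((szaszMoment n m k : ℝ) : ℂ))
        + (((n:ℂ)*z+(k:ℂ))/(n:ℂ)) * ((n:ℂ) * ∑' m : ℕ, baskakovBasis n (m+1) z * ((szaszMoment n m k : ℝ) : ℂ)) := by
    rw [← tsum_mul_left, ← tsum_mul_left, ← tsum_mul_left, ← tsum_mul_left, ← tsum_mul_left,
      ← Summable.tsum_add ((hsumD.mul_left _).mul_left _) ((hsumF.mul_left _).mul_left _)]
    exact tsum_congr hterm
  -- the extra (zpow) term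
  have hextra : (1+z)^(-(n:ℤ)) * (0:ℂ)^(k+1)
      = (z*(1+z)/(n:ℂ)) * ((((-(n:ℤ)) : ℂ) * (1+z)^(-(n:ℤ)-1)) * (0:ℂ)^k)
        + (((n:ℂ)*z+(k:ℂ))/(n:ℂ)) * ((1+z)^(-(n:ℤ)) * (0:ℂ)^k) := by
    cases k with
    | zero =>
      have hzp' : (1+z)^(-(n:ℤ)-1) = (1+z)^(-(n:ℤ)) * (1+z)⁻¹ := zpow_sub_one₀ h1z _
      simp only [pow_zero, pow_one, mul_one, Nat.cast_zero, add_zero, mul_zero, zero_mul]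
      rw [hzp']
      push_cast
      field_simp
      ring
    | succ j =>
      simp [pow_succ]
  -- final assembly
  simp only [S]
  rw [hS_deriv]
  linear_combination hsum_eq + hextra
end

section
/- For every n ≥ 1 and k ≥ 0, the function S_{n,k} coincides on the half-plane {z ∈ ℂ : Re z > −1/2} with a polynomial of degree at most k; namely S_{n,k}(z) = T_{n,k}(z) there, where the polynomials T_{n,k} are defined recursively by T_{n,0}(z) = 1 and T_{n,k+1}(z) = (z(1+z)/n) · T_{n,k}′(z) + ((nz+k)/n) · T_{n,k}(z). -/
open MeasureTheory

/-- The polynomials `T_{n,k}` defined by `T_{n,0}(z) = 1` and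
`T_{n,k+1}(z) = (z(1+z)/n) · T_{n,k}′(z) + ((nz+k)/n) · T_{n,k}(z)`. -/
noncomputable def T (n : ℕ) : ℕ → ℂ → ℂ
  | 0 => fun _ => 1
  | k + 1 => fun z =>
      (z * (1 + z) / (n : ℂ)) * deriv (T n k) z + (((n : ℂ) * z + (k : ℂ)) / (n : ℂ)) * T n k z

namespace BSAux

def a (n : ℕ) : ℕ → ℕ → ℕ
  | 0, i => if i = 0 then 1 else 0
  | k+1, 0 => k * a n k 0
  | k+1, i+1 => (i+1+k) * a n k (i+1) + (n+i) * a n k i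

lemma a_eq_zero (n : ℕ) : ∀ k i, k < i → a n k i = 0 := by
  intro k
  induction k with
  | zero =>
    intro i h
    cases i with
    | zero => omega
    | succ j => simp [a]
  | succ k ih =>
    intro i h
    cases i with
    | zero => omega
    | succ j =>
      simp [a, ih (j+1) (by omega), ih j (by omega)]

lemma a_zero_left (n : ℕ) : ∀ k, a n (k+1) 0 = 0 := by
  intro k
  induction k with
  | zero => simp [a]
  | succ k ih => rw [show a n (k+1+1) 0 = (k+1) * a n (k+1) 0 from rfl, ih, Nat.mul_zero]

def cho (n v i : ℕ) : ℕ := if i ≤ v + 1 then (n + v).choose (v + 1 - i) else 0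

lemma cho_step (n v i : ℕ) : (n + i) * cho n v (i+1) = (v + 1 - i) * cho n v i := by
  rcases le_or_gt i v with h | h
  · unfold cho
    rw [if_pos (by omega), if_pos (by omega)]
    have h1 : v + 1 - (i+1) = v - i := by omega
    have h2 : v + 1 - i = (v - i) + 1 := by omega
    rw [h1, h2]
    have := Nat.choose_succ_right_eq (n + v) (v - i)
    have h3 : n + v - (v - i) = n + i := by omega
    rw [h3] at this
    calc (n + i) * (n + v).choose (v - i) = (n + v).choose (v - i) * (n + i) := by ring
      _ = (n + v).choose (v - i + 1) * (v - i + 1) := this.symm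
      _ = (v - i + 1) * (n + v).choose (v - i + 1) := by ring
  · have h1 : cho n v (i+1) = 0 := by unfold cho; rw [if_neg (by omega)]
    have h2 : v + 1 - i = 0 := by omega
    rw [h1, h2]
    ring

lemma step (n v k i : ℕ) :
    (v + k + 1) * (a n k i * cho n v i)
      = (i + k) * (a n k i * cho n v i) + (n + i) * (a n k i * cho n v (i+1)) := by
  rcases le_or_gt i (v+1) with h | h
  · have hsplit : v + k + 1 = (i + k) + (v + 1 - i) := by omega
    rw [hsplit, add_mul]
    congr 1
    calc (v + 1 - i) * (a n k i * cho n v i)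
        = a n k i * ((v + 1 - i) * cho n v i) := by ring
      _ = a n k i * ((n + i) * cho n v (i+1)) := by rw [← cho_step]
      _ = (n + i) * (a n k i * cho n v (i+1)) := by ring
  · have h1 : cho n v i = 0 := by unfold cho; rw [if_neg (by omega)]
    have h2 : cho n v (i+1) = 0 := by unfold cho; rw [if_neg (by omega)]
    simp [h1, h2]

lemma key (n v : ℕ) : ∀ k, (n+v).choose (v+1) * (v+k).descFactorial k
    = ∑ i ∈ Finset.range (k+1), a n k i * cho n v i := by
  intro k
  induction k with
  | zero => simp [a, cho]
  | succ k ih =>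
    have hL : (v + (k+1)).descFactorial (k+1) = (v+k+1) * (v+k).descFactorial k := by
      have h := Nat.succ_descFactorial_succ (v+k) k
      have hv : v + (k+1) = (v+k) + 1 := by omega
      rw [hv, h]
    have e3 : ∑ i ∈ Finset.range (k+1), (i + k) * (a n k i * cho n v i)
        = (∑ i ∈ Finset.range (k+1), (i+1+k) * (a n k (i+1) * cho n v (i+1)))
          + a n (k+1) 0 * cho n v 0 := by
      rw [Finset.sum_range_succ (fun i => (i+1+k) * (a n k (i+1) * cho n v (i+1))) k,
        a_eq_zero n k (k+1) (by omega),
        Finset.sum_range_succ' (fun i => (i + k) * (a n k i * cho n v i)) k,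
        show a n (k+1) 0 = k * a n k 0 from rfl]
      simp [Nat.zero_add, mul_assoc]
    have main : ∑ i ∈ Finset.range (k+2), a n (k+1) i * cho n v i
        = ∑ i ∈ Finset.range (k+1), (v+k+1) * (a n k i * cho n v i) := by
      rw [Finset.sum_range_succ' (fun i => a n (k+1) i * cho n v i) (k+1)]
      have e1 : (∑ i ∈ Finset.range (k+1), a n (k+1) (i+1) * cho n v (i+1))
          = ∑ i ∈ Finset.range (k+1),
            ((i+1+k) * (a n k (i+1) * cho n v (i+1)) + (n+i) * (a n k i * cho n v (i+1))) := by
        refine Finset.sum_congr rfl fun i _ => ?_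
        show ((i+1+k) * a n k (i+1) + (n+i) * a n k i) * cho n v (i+1) = _
        ring
      have e2 : (∑ i ∈ Finset.range (k+1), (v+k+1) * (a n k i * cho n v i))
          = ∑ i ∈ Finset.range (k+1),
            ((i + k) * (a n k i * cho n v i) + (n + i) * (a n k i * cho n v (i+1))) :=
        Finset.sum_congr rfl fun i _ => step n v k i
      rw [e1, e2, Finset.sum_add_distrib, Finset.sum_add_distrib, e3]
      ring
    calc (n+v).choose (v+1) * (v + (k+1)).descFactorial (k+1)
        = (v+k+1) * ((n+v).choose (v+1) * (v+k).descFactorial k) := by rw [hL]; ring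
      _ = (v+k+1) * ∑ i ∈ Finset.range (k+1), a n k i * cho n v i := by rw [ih]
      _ = ∑ i ∈ Finset.range (k+1), (v+k+1) * (a n k i * cho n v i) := by
          rw [Finset.mul_sum]
      _ = ∑ i ∈ Finset.range (k+2), a n (k+1) i * cho n v i := main.symm

/-- The complex sum identity behind the recursion for `T`. -/
lemma sum_id (n k : ℕ) (z : ℂ) :
    ∑ i ∈ Finset.range (k+2), (a n (k+1) i : ℂ) * z^i
      = z * (1 + z) * (∑ i ∈ Finset.range (k+1), (a n k i : ℂ) * ((i : ℂ) * z^(i-1)))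
        + ((n : ℂ) * z + (k : ℂ)) * ∑ i ∈ Finset.range (k+1), (a n k i : ℂ) * z^i := by
  have hzi : ∀ i : ℕ, z * ((i : ℂ) * z^(i-1)) = (i : ℂ) * z^i := by
    intro i
    cases i with
    | zero => simp
    | succ j => push_cast; rw [pow_succ]; ring
  have hR : z * (1 + z) * (∑ i ∈ Finset.range (k+1), (a n k i : ℂ) * ((i : ℂ) * z^(i-1)))
        + ((n : ℂ) * z + (k : ℂ)) * ∑ i ∈ Finset.range (k+1), (a n k i : ℂ) * z^i
      = (∑ i ∈ Finset.range (k+1), ((i : ℂ) + k) * ((a n k i : ℂ) * z^i))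
        + ∑ i ∈ Finset.range (k+1), ((n : ℂ) + i) * ((a n k i : ℂ) * z^(i+1)) := by
    rw [Finset.mul_sum, Finset.mul_sum, ← Finset.sum_add_distrib, ← Finset.sum_add_distrib]
    refine Finset.sum_congr rfl fun i _ => ?_
    have h1 : z * (1+z) * ((a n k i : ℂ) * ((i:ℂ) * z^(i-1)))
        = (1+z) * ((a n k i : ℂ) * (z * ((i:ℂ) * z^(i-1)))) := by ring
    rw [h1, hzi i]
    rw [pow_succ]
    ring
  rw [hR]
  have e3 : ∑ i ∈ Finset.range (k+1), ((i : ℂ) + k) * ((a n k i : ℂ) * z^i)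
      = (∑ i ∈ Finset.range (k+1), (((i:ℂ)+1+k) * ((a n k (i+1) : ℂ) * z^(i+1))))
        + (k : ℂ) * ((a n k 0 : ℂ) * 1) := by
    rw [Finset.sum_range_succ (fun i => ((i:ℂ)+1+k) * ((a n k (i+1) : ℂ) * z^(i+1))) k,
      a_eq_zero n k (k+1) (by omega),
      Finset.sum_range_succ' (fun i => ((i:ℂ) + k) * ((a n k i : ℂ) * z^i)) k]
    simp
  rw [e3]
  rw [Finset.sum_range_succ' (fun i => (a n (k+1) i : ℂ) * z^i) (k+1)]
  have e1 : (∑ i ∈ Finset.range (k+1), (a n (k+1) (i+1) : ℂ) * z^(i+1))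
      = ∑ i ∈ Finset.range (k+1),
        (((i:ℂ)+1+k) * ((a n k (i+1) : ℂ) * z^(i+1)) + ((n:ℂ)+i) * ((a n k i : ℂ) * z^(i+1))) := by
    refine Finset.sum_congr rfl fun i _ => ?_
    rw [show a n (k+1) (i+1) = (i+1+k) * a n k (i+1) + (n+i) * a n k i from rfl]
    push_cast
    ring
  rw [e1, Finset.sum_add_distrib,
    show a n (k+1) 0 = k * a n k 0 from rfl]
  push_cast
  ring

lemma T_eq (n : ℕ) (hn : 1 ≤ n) (k : ℕ) (z : ℂ) :
    T n k z = (∑ i ∈ Finset.range (k+1), (a n k i : ℂ) * z^i) / (n:ℂ)^k := by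
  have hN : (n:ℂ) ≠ 0 := Nat.cast_ne_zero.mpr (by omega)
  induction k generalizing z with
  | zero => simp [T, a]
  | succ k ih =>
    have hfun : T n k = fun w => (∑ i ∈ Finset.range (k+1), (a n k i : ℂ) * w^i) / (n:ℂ)^k :=
      funext fun w => ih w
    have hD : deriv (T n k) z
        = (∑ i ∈ Finset.range (k+1), (a n k i : ℂ) * ((i : ℂ) * z^(i-1))) / (n:ℂ)^k := by
      rw [hfun]
      rw [deriv_div_const]
      congr 1
      rw [deriv_fun_sum (fun i _ => ((differentiableAt_pow i).const_mul _))]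
      refine Finset.sum_congr rfl fun i _ => ?_
      rw [deriv_const_mul_field, deriv_pow_field]
    show (z * (1 + z) / (n : ℂ)) * deriv (T n k) z
        + (((n : ℂ) * z + (k : ℂ)) / (n : ℂ)) * T n k z = _
    have hgen : ∀ A B C D : ℂ, (A/(n:ℂ)) * (B/(n:ℂ)^k) + (C/(n:ℂ)) * (D/(n:ℂ)^k)
        = (A*B + C*D)/(n:ℂ)^(k+1) := by
      intro A B C D
      rw [div_mul_div_comm, div_mul_div_comm, ← add_div, pow_succ']
    rw [hD, ih z, hgen, sum_id n k z]


end BSAux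

lemma moment_eq (n v k : ℕ) (hn : 1 ≤ n) :
    szaszMoment n v k = ((v+k).descFactorial k : ℝ) / (n : ℝ)^(k+1) := by
  have hn0 : (0:ℝ) < n := by exact_mod_cast Nat.pos_of_ne_zero (by omega)
  have hcongr : ∀ t ∈ Set.Ioi (0:ℝ),
      Real.exp (-((n : ℝ) * t)) * ((n : ℝ) * t) ^ v / (v.factorial : ℝ) * t ^ k
        = ((n:ℝ)^v / (v.factorial : ℝ)) *
          (t ^ ((((v+k+1 : ℕ)):ℝ) - 1) * Real.exp (-((n:ℝ) * t))) := by
    intro t ht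
    have h1 : (((v+k+1 : ℕ)):ℝ) - 1 = (((v+k : ℕ)):ℝ) := by push_cast; ring
    rw [h1, Real.rpow_natCast, pow_add, mul_pow]
    ring
  rw [szaszMoment, setIntegral_congr_fun measurableSet_Ioi hcongr,
    MeasureTheory.integral_const_mul,
    Real.integral_rpow_mul_exp_neg_mul_Ioi (by positivity) hn0]
  have h2 : (((v+k+1 : ℕ)):ℝ) = (((v+k:ℕ)):ℝ) + 1 := by push_cast; ring
  rw [h2, Real.Gamma_nat_eq_factorial, ← h2, Real.rpow_natCast]
  have hfac : (v.factorial : ℝ) * ((v+k).descFactorial k : ℝ) = ((v+k).factorial : ℝ) := by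
    have := Nat.factorial_mul_descFactorial (Nat.le_add_left k v)
    have h3 : v + k - k = v := by omega
    rw [h3] at this
    exact_mod_cast this
  have hv : (v.factorial : ℝ) ≠ 0 := Nat.cast_ne_zero.mpr (Nat.factorial_ne_zero v)
  rw [one_div, inv_pow, ← hfac]
  have hne : (n:ℝ) ≠ 0 := ne_of_gt hn0
  field_simp
  ring

section Analytic

variable {n : ℕ} {z : ℂ}

lemma one_add_ne_s3 (hz : -1/2 < z.re) : (1 : ℂ) + z ≠ 0 := by
  intro h
  have := congrArg Complex.re h
  simp at this
  linarith

lemma norm_lt (hz : -1/2 < z.re) : ‖z / (1+z)‖ < 1 := by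
  have hz1 : (1:ℂ) + z ≠ 0 := one_add_ne_s3 hz
  rw [norm_div, div_lt_one (norm_pos_iff.mpr hz1)]
  have h2 : ‖z‖^2 < ‖1+z‖^2 := by
    rw [Complex.sq_norm, Complex.sq_norm,
      Complex.normSq_apply, Complex.normSq_apply]
    simp only [Complex.add_re, Complex.add_im, Complex.one_re, Complex.one_im]
    nlinarith [sq_nonneg z.im]
  exact lt_of_pow_lt_pow_left₀ 2 (norm_nonneg _) h2

lemma master (hz : -1/2 < z.re) (m : ℕ) :
    HasSum (fun w : ℕ => ((w + m).choose m : ℂ) * (z/(1+z))^w) ((1+z)^(m+1)) := by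
  have hz1 : (1:ℂ) + z ≠ 0 := one_add_ne_s3 hz
  have h := hasSum_choose_mul_geometric_of_norm_lt_one m (norm_lt hz)
  have hsub : (1:ℂ) - z/(1+z) = 1/(1+z) := by field_simp; ring
  rw [hsub] at h
  simpa [one_div, inv_pow, inv_inv] using h
end Analytic

namespace BSAux

variable {n : ℕ} {z : ℂ}

lemma shifted (hn : 1 ≤ n) (hz : -1/2 < z.re) (j : ℕ) :
    HasSum (fun v : ℕ => (cho n v (j+1) : ℂ) * (z/(1+z))^(v+1)) (z^(j+1) * (1+z)^n) := by
  have hz1 : (1:ℂ) + z ≠ 0 := one_add_ne_s3 hz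
  have h2 := (master hz (n+j)).mul_right ((z/(1+z))^(j+1))
  have hinj : Function.Injective (fun w : ℕ => w + j) := add_left_injective j
  refine (Function.Injective.hasSum_iff hinj ?_).mp ?_
  · intro v hv
    have hvj : v < j := by
      by_contra hc
      exact hv ⟨v - j, show v - j + j = v by omega⟩
    have hc : cho n v (j+1) = 0 := by unfold cho; rw [if_neg (by omega)]
    simp [hc]
  · have heq : (fun w : ℕ => ((w + (n+j)).choose (n+j) : ℂ) * (z/(1+z))^w * (z/(1+z))^(j+1))
        = ((fun v : ℕ => (cho n v (j+1) : ℂ) * (z/(1+z))^(v+1)) ∘ (fun w : ℕ => w + j)) := by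
      funext w
      simp only [Function.comp]
      have harg : w + (n+j) = n + (w+j) := by omega
      have hch : cho n (w+j) (j+1) = (n + (w+j)).choose w := by
        unfold cho
        rw [if_pos (by omega)]
        congr 1
        omega
      have hsymm : (n + (w+j)).choose w = (n + (w+j)).choose (n+j) := by
        have h := Nat.choose_symm (show w ≤ n + (w+j) by omega)
        rw [show n + (w+j) - w = n + j by omega] at h
        exact h.symm
      rw [harg, hch, hsymm]
      ring
    have hval : (1+z)^(n+j+1) * (z/(1+z))^(j+1) = z^(j+1) * (1+z)^n := by
      rw [div_pow, show n+j+1 = n + (j+1) from rfl, pow_add]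
      field_simp
    rw [heq, hval] at h2
    exact h2

lemma sum0 (hn : 1 ≤ n) (hz : -1/2 < z.re) :
    HasSum (fun v : ℕ => (((n+v).choose (v+1)) : ℂ) * (z/(1+z))^(v+1)) ((1+z)^n - 1) := by
  have h := master hz (n-1)
  rw [show n-1+1 = n by omega] at h
  have h2 : HasSum (fun v : ℕ => ((v + 1 + (n-1)).choose (n-1) : ℂ) * (z/(1+z))^(v+1))
      ((1+z)^n - 1) := by
    exact (hasSum_nat_add_iff
      (f := fun w : ℕ => ((w + (n-1)).choose (n-1) : ℂ) * (z/(1+z))^w) 1).mpr (by simpa using h)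
  have heq : (fun v : ℕ => ((v + 1 + (n-1)).choose (n-1) : ℂ) * (z/(1+z))^(v+1))
      = fun v : ℕ => (((n+v).choose (v+1)) : ℂ) * (z/(1+z))^(v+1) := by
    funext v
    have hch : (v+1+(n-1)).choose (n-1) = (n+v).choose (v+1) := by
      have harg : v+1+(n-1) = n+v := by omega
      rw [harg]
      have h4 := Nat.choose_symm (show n-1 ≤ n+v by omega)
      rw [show n+v-(n-1) = v+1 by omega] at h4
      exact h4.symm
    rw [hch]
  rw [heq] at h2
  exact h2

lemma weighted (hn : 1 ≤ n) (hz : -1/2 < z.re) (k : ℕ) :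
    HasSum (fun v : ℕ =>
        (((n+v).choose (v+1) * (v+(k+1)).descFactorial (k+1) : ℕ) : ℂ) * (z/(1+z))^(v+1))
      ((1+z)^n * ∑ i ∈ Finset.range (k+2), (a n (k+1) i : ℂ) * z^i) := by
  have H : ∀ i ∈ Finset.range (k+2),
      HasSum (fun v : ℕ => (a n (k+1) i : ℂ) * ((cho n v i : ℂ) * (z/(1+z))^(v+1)))
        ((a n (k+1) i : ℂ) * (z^i * (1+z)^n)) := by
    intro i _
    cases i with
    | zero =>
      rw [a_zero_left n k]
      simp only [Nat.cast_zero, zero_mul]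
      exact hasSum_zero
    | succ j => exact (shifted hn hz j).mul_left _
  have hs := hasSum_sum H
  have hfun : (fun v : ℕ => ∑ i ∈ Finset.range (k+2),
        (a n (k+1) i : ℂ) * ((cho n v i : ℂ) * (z/(1+z))^(v+1)))
      = fun v : ℕ =>
        (((n+v).choose (v+1) * (v+(k+1)).descFactorial (k+1) : ℕ) : ℂ) * (z/(1+z))^(v+1) := by
    funext v
    have hnat := key n v (k+1)
    calc ∑ i ∈ Finset.range (k+2), (a n (k+1) i : ℂ) * ((cho n v i : ℂ) * (z/(1+z))^(v+1))
        = (∑ i ∈ Finset.range (k+2), ((a n (k+1) i * cho n v i : ℕ) : ℂ)) * (z/(1+z))^(v+1) := by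
          rw [Finset.sum_mul]
          exact Finset.sum_congr rfl fun i _ => by push_cast; ring
      _ = (((∑ i ∈ Finset.range (k+2), a n (k+1) i * cho n v i : ℕ)) : ℂ) * (z/(1+z))^(v+1) := by
          rw [Nat.cast_sum]
      _ = _ := by rw [← hnat]
  have hval : (∑ i ∈ Finset.range (k+2), (a n (k+1) i : ℂ) * (z^i * (1+z)^n))
      = (1+z)^n * ∑ i ∈ Finset.range (k+2), (a n (k+1) i : ℂ) * z^i := by
    rw [Finset.mul_sum]
    exact Finset.sum_congr rfl fun i _ => by ring
  rw [hfun, hval] at hs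
  exact hs

lemma S_eq (hn : 1 ≤ n) (k : ℕ) (hz : -1/2 < z.re) :
    S n k z = (∑ i ∈ Finset.range (k+1), (a n k i : ℂ) * z^i) / (n:ℂ)^k := by
  have hz1 : (1:ℂ) + z ≠ 0 := one_add_ne_s3 hz
  have hN : (n:ℂ) ≠ 0 := Nat.cast_ne_zero.mpr (by omega)
  have hNp : ((1:ℂ)+z)^n ≠ 0 := pow_ne_zero _ hz1
  have hzpow : ((1:ℂ)+z) ^ (-(n:ℤ)) = (((1:ℂ)+z)^n)⁻¹ := by
    rw [zpow_neg, zpow_natCast]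
  cases k with
  | zero =>
    have hterm : ∀ v : ℕ, baskakovBasis n (v+1) z * (szaszMoment n v 0 : ℂ)
        = ((n+v).choose (v+1) : ℂ) * (z/(1+z))^(v+1) * ((((1:ℂ)+z)^n)⁻¹ * (n:ℂ)⁻¹) := by
      intro v
      have hm : (szaszMoment n v 0 : ℂ) = ((n:ℂ))⁻¹ := by
        rw [moment_eq n v 0 hn]
        push_cast [Nat.descFactorial]
        rw [pow_one, one_div]
      have hp : ((1:ℂ)+z)^(n+v+1) = (1+z)^(v+1) * (1+z)^n := by
        rw [← pow_add]
        congr 1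
        omega
      rw [hm]
      unfold baskakovBasis
      rw [show n + (v+1) - 1 = n + v by omega, show n + (v+1) = n + v + 1 from rfl,
        div_pow, hp]
      field_simp
    have hsum := (sum0 hn hz).mul_right ((((1:ℂ)+z)^n)⁻¹ * (n:ℂ)⁻¹)
    rw [S, tsum_congr hterm, hsum.tsum_eq, hzpow]
    have ha0 : ∑ i ∈ Finset.range 1, (a n 0 i : ℂ) * z^i = 1 := by simp [a]
    rw [ha0]
    simp only [pow_zero, mul_one]
    field_simp
    ring
  | succ k =>
    have hterm : ∀ v : ℕ, baskakovBasis n (v+1) z * (szaszMoment n v (k+1) : ℂ)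
        = (((n+v).choose (v+1) * (v+(k+1)).descFactorial (k+1) : ℕ) : ℂ) * (z/(1+z))^(v+1)
          * ((((1:ℂ)+z)^n)⁻¹ * ((n:ℂ)^(k+2))⁻¹) := by
      intro v
      have hm : (szaszMoment n v (k+1) : ℂ)
          = ((v+(k+1)).descFactorial (k+1) : ℂ) / (n:ℂ)^(k+2) := by
        rw [moment_eq n v (k+1) hn]
        push_cast
        ring
      have hp : ((1:ℂ)+z)^(n+v+1) = (1+z)^(v+1) * (1+z)^n := by
        rw [← pow_add]
        congr 1
        omega
      rw [hm]
      unfold baskakovBasis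
      rw [show n + (v+1) - 1 = n + v by omega, show n + (v+1) = n + v + 1 from rfl,
        div_pow, hp]
      push_cast
      field_simp
    have hsum := (weighted hn hz k).mul_right ((((1:ℂ)+z)^n)⁻¹ * ((n:ℂ)^(k+2))⁻¹)
    rw [S, tsum_congr hterm, hsum.tsum_eq, hzpow]
    rw [zero_pow (Nat.succ_ne_zero k), mul_zero, add_zero]
    field_simp
    ring

end BSAux

open BSAux in
/-- For `n ≥ 1` and `k ≥ 0`, `S_{n,k}` coincides on `{Re z > −1/2}` with the
polynomial `T_{n,k}`, which has degree at most `k`. -/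
theorem S_eq_polynomial (n : ℕ) (hn : 1 ≤ n) (k : ℕ) :
    ∃ P : Polynomial ℂ, P.degree ≤ (k : ℕ) ∧ (∀ z : ℂ, T n k z = P.eval z) ∧
      ∀ z : ℂ, -1/2 < z.re → S n k z = T n k z := by
  refine ⟨∑ i ∈ Finset.range (k+1), Polynomial.C ((a n k i : ℂ) / (n:ℂ)^k) * Polynomial.X^i,
    ?_, ?_, ?_⟩
  · refine le_trans (Polynomial.degree_sum_le _ _) ?_
    refine Finset.sup_le fun i hi => ?_
    refine le_trans (Polynomial.degree_C_mul_X_pow_le _ _) ?_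
    exact_mod_cast Nat.cast_le.mpr (by simpa using Nat.lt_succ_iff.mp (Finset.mem_range.mp hi))
  · intro z
    rw [T_eq n hn k z]
    simp only [Polynomial.eval_finset_sum, Polynomial.eval_mul, Polynomial.eval_C,
      Polynomial.eval_pow, Polynomial.eval_X]
    rw [Finset.sum_div]
    exact Finset.sum_congr rfl fun i _ => by ring
  · intro z hz
    rw [S_eq hn k hz, T_eq n hn k z]
end

section
/- Let r ≥ 1 be a real number and let n ∈ ℕ satisfy n ≥ r + 2. Then for every k ≥ 1, sup_{|z| ≤ r} |T_{n,k}(z) − z^k| ≤ (r+2) · (k+1)! · r^{k−1} / n. -/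
open Polynomial Finset


noncomputable def Qp (n : ℕ) : ℕ → Polynomial ℝ
  | 0 => 1
  | k + 1 => C (1/(n:ℝ)) *
      (X * (1+X) * derivative (Qp n k) + (C (n:ℝ) * X + C (k:ℝ)) * Qp n k)

lemma T_eq_aeval (n k : ℕ) : T n k = fun z => aeval z (Qp n k) := by
  induction k with
  | zero => funext z; simp [T, Qp]
  | succ k ih =>
    funext z
    have hd : deriv (T n k) z = aeval z (derivative (Qp n k)) := by
      rw [ih]; exact Polynomial.deriv_aeval _
    show (z * (1 + z) / (n : ℂ)) * deriv (T n k) z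
        + (((n : ℂ) * z + (k : ℂ)) / (n : ℂ)) * T n k z = _
    rw [hd, ih]
    simp only [Qp, map_mul, map_add, aeval_X, aeval_C, map_one]
    have : (algebraMap ℝ ℂ) (1/(n:ℝ)) = 1/(n:ℂ) := by
      simp [Complex.coe_algebraMap]
    rw [this]
    have : (algebraMap ℝ ℂ) (n:ℝ) = (n:ℂ) := by simp [Complex.coe_algebraMap]
    rw [this]
    have : (algebraMap ℝ ℂ) (k:ℝ) = (k:ℂ) := by simp [Complex.coe_algebraMap]
    rw [this]
    ring

lemma Qp_coeff_nonneg (n k : ℕ) : ∀ j, 0 ≤ (Qp n k).coeff j := by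
  induction k with
  | zero => intro j; simp [Qp, coeff_one]; split <;> norm_num
  | succ k ih =>
    have hmul : ∀ p q : Polynomial ℝ, (∀ j, 0 ≤ p.coeff j) → (∀ j, 0 ≤ q.coeff j) →
        ∀ j, 0 ≤ (p*q).coeff j := by
      intro p q hp hq j
      rw [coeff_mul]
      exact Finset.sum_nonneg fun x _ => mul_nonneg (hp _) (hq _)
    have hder : ∀ j, 0 ≤ (derivative (Qp n k)).coeff j := by
      intro j; rw [coeff_derivative]
      exact mul_nonneg (ih _) (by positivity)
    intro j
    refine hmul _ _ (fun j => ?_) (fun j => ?_) j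
    · simp [coeff_C]; split <;> positivity
    · rw [coeff_add]
      refine add_nonneg (hmul _ _ (hmul _ _ (fun j => ?_) (fun j => ?_)) hder _)
        (hmul _ _ (fun j => ?_) ih _)
      · simp [coeff_X]; split <;> norm_num
      · simp [coeff_add, coeff_one, coeff_X]; split <;> split <;> norm_num
      · rw [coeff_add]
        refine add_nonneg ?_ ?_
        · rw [coeff_C_mul]
          refine mul_nonneg (by positivity) ?_
          simp [coeff_X]; split <;> norm_num
        · simp [coeff_C]; split <;> positivity

lemma Qp_natDegree_le (n k : ℕ) : (Qp n k).natDegree ≤ k := by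
  induction k with
  | zero => simp [Qp]
  | succ k ih =>
    rw [Qp]
    refine (natDegree_C_mul_le _ _).trans ?_
    refine (natDegree_add_le _ _).trans (max_le ?_ ?_)
    · cases k with
      | zero =>
        have h0 : derivative (Qp n 0) = 0 := by
          show derivative (1 : Polynomial ℝ) = 0
          simp
        rw [h0, mul_zero]
        simp
      | succ m =>
        refine (natDegree_mul_le).trans ?_
        have h1 : (X * (1+X) : Polynomial ℝ).natDegree ≤ 2 := by
          refine natDegree_mul_le.trans ?_
          have h3 : (1 + X : Polynomial ℝ).natDegree ≤ 1 :=
            (natDegree_add_le _ _).trans (by simp)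
          rw [natDegree_X]
          omega
        have h2 : (derivative (Qp n (m+1))).natDegree ≤ m :=
          (natDegree_derivative_le _).trans (Nat.sub_le_sub_right ih 1)
        omega
    · refine (natDegree_mul_le).trans ?_
      have h1 : ((C (n:ℝ) * X + C (k:ℝ)) : Polynomial ℝ).natDegree ≤ 1 := by
        refine (natDegree_add_le _ _).trans (max_le ?_ (by simp))
        exact (natDegree_C_mul_le _ _).trans (by simp)
      omega

lemma Qp_coeff_top (n k : ℕ) (hn : 0 < n) : 1 ≤ (Qp n k).coeff k := by
  induction k with
  | zero => simp [Qp]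
  | succ k ih =>
    have hnn := Qp_coeff_nonneg n k
    rw [Qp, coeff_C_mul]
    have h1 : 0 ≤ (X * (1+X) * derivative (Qp n k)).coeff (k+1) := by
      rw [coeff_mul]
      refine Finset.sum_nonneg fun x _ => mul_nonneg ?_ ?_
      · rw [coeff_mul]
        refine Finset.sum_nonneg fun y _ => mul_nonneg ?_ ?_
        · simp [coeff_X]; split <;> norm_num
        · simp [coeff_add, coeff_one, coeff_X]; split <;> split <;> norm_num
      · rw [coeff_derivative]; exact mul_nonneg (hnn _) (by positivity)
    have h2 : ((C (n:ℝ) * X + C (k:ℝ)) * Qp n k).coeff (k+1)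
        = (n:ℝ) * (Qp n k).coeff k + (k:ℝ) * (Qp n k).coeff (k+1) := by
      rw [add_mul, coeff_add, mul_assoc, coeff_C_mul, coeff_C_mul, coeff_X_mul]
    have h3 : 0 ≤ (k:ℝ) * (Qp n k).coeff (k+1) := mul_nonneg (by positivity) (hnn _)
    rw [coeff_add, h2]
    have hn' : (0:ℝ) < n := by exact_mod_cast hn
    rw [one_div, inv_mul_eq_div, le_div_iff₀ hn']
    nlinarith

lemma eval_nonneg (p : Polynomial ℝ) (hp : ∀ j, 0 ≤ p.coeff j) {r : ℝ} (hr : 0 ≤ r) :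
    0 ≤ p.eval r := by
  rw [eval_eq_sum_range]
  exact Finset.sum_nonneg fun i _ => mul_nonneg (hp _) (by positivity)

lemma deriv_eval_le (p : Polynomial ℝ) (hp : ∀ j, 0 ≤ p.coeff j) (k : ℕ)
    (hdeg : p.natDegree ≤ k) {r : ℝ} (hr : 1 ≤ r) :
    r * (derivative p).eval r ≤ k * p.eval r := by
  have hr0 : (0:ℝ) < r := lt_of_lt_of_le one_pos hr
  have hd : (derivative p).natDegree < k + 1 :=
    lt_of_le_of_lt ((natDegree_derivative_le _).trans (Nat.sub_le _ _)) (by omega)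
  rw [eval_eq_sum_range' hd, Finset.mul_sum]
  have key : ∀ i ∈ Finset.range (k+1),
      r * ((derivative p).coeff i * r ^ i) ≤ k * (p.coeff (i+1) * r ^ (i+1)) := by
    intro i _
    rw [coeff_derivative]
    rcases le_or_gt (i+1) k with h | h
    · have : r * (p.coeff (i+1) * (↑i + 1) * r ^ i) = ((i:ℝ)+1) * (p.coeff (i+1) * r^(i+1)) := by
        ring
      rw [this]
      refine mul_le_mul_of_nonneg_right ?_ (mul_nonneg (hp _) (by positivity))
      exact_mod_cast h
    · have : p.coeff (i+1) = 0 := coeff_eq_zero_of_natDegree_lt (by omega)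
      simp [this]
  calc ∑ i ∈ Finset.range (k+1), r * ((derivative p).coeff i * r ^ i)
      ≤ ∑ i ∈ Finset.range (k+1), (k:ℝ) * (p.coeff (i+1) * r ^ (i+1)) := by
        refine Finset.sum_le_sum fun i hi => ?_
        have := key i hi
        linarith [key i hi]
    _ = (k:ℝ) * ∑ i ∈ Finset.range (k+1), p.coeff (i+1) * r ^ (i+1) := by
        rw [Finset.mul_sum]
    _ ≤ (k:ℝ) * p.eval r := by
        refine mul_le_mul_of_nonneg_left ?_ (by positivity)
        have hd2 : p.natDegree < k + 2 := by omega
        rw [eval_eq_sum_range' hd2 r,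
          Finset.sum_range_succ' (fun i => p.coeff i * r ^ i) (k+1)]
        have h0 : 0 ≤ p.coeff 0 * r ^ 0 := mul_nonneg (hp _) (by positivity)
        exact le_add_of_nonneg_right h0

lemma eval_step (n k : ℕ) (hn0 : 0 < (n:ℝ)) {r : ℝ} (hr : 1 ≤ r) :
    (Qp n (k+1)).eval r ≤ (r + k*(r+2)/n) * (Qp n k).eval r := by
  have hr0 : (0:ℝ) ≤ r := by linarith
  have hE0 : 0 ≤ (Qp n k).eval r := eval_nonneg _ (Qp_coeff_nonneg n k) hr0
  have hD0 : 0 ≤ (derivative (Qp n k)).eval r := by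
    refine eval_nonneg _ (fun j => ?_) hr0
    rw [coeff_derivative]
    exact mul_nonneg (Qp_coeff_nonneg n k _) (by positivity)
  have hD := deriv_eval_le (Qp n k) (Qp_coeff_nonneg n k) k (Qp_natDegree_le n k) hr
  have hcalc : (Qp n (k+1)).eval r = 1/(n:ℝ) *
      (r*(1+r)*((derivative (Qp n k)).eval r) + ((n:ℝ)*r + k) * (Qp n k).eval r) := by
    simp [Qp]
  rw [hcalc, one_div, inv_mul_eq_div, div_le_iff₀ hn0]
  have expand : (r + k*(r+2)/n) * (Qp n k).eval r * n
      = r*((Qp n k).eval r)*n + k*(r+2)*((Qp n k).eval r) := by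
    field_simp
  rw [expand]
  nlinarith [mul_le_mul_of_nonneg_left hD (show (0:ℝ) ≤ 1+r by linarith)]

lemma Qp_eval_bound (r : ℝ) (hr : 1 ≤ r) (n : ℕ) (hn : r + 2 ≤ (n:ℝ)) (m : ℕ) :
    (Qp n (m+1)).eval r ≤ r^(m+1) + (r+2) * (((m+2).factorial : ℕ) : ℝ) * r^m / n := by
  have hn0 : (0:ℝ) < n := by linarith
  have hnne : (n:ℝ) ≠ 0 := ne_of_gt hn0
  induction m with
  | zero =>
    have h1 : (Qp n 1).eval r = r := by
      show (C (1/(n:ℝ)) * (X * (1+X) * derivative (Qp n 0)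
          + (C (n:ℝ) * X + C ((0:ℕ):ℝ)) * Qp n 0)).eval r = r
      have h0 : derivative (Qp n 0) = 0 := by
        show derivative (1 : Polynomial ℝ) = 0
        simp
      rw [h0]
      show (C (1/(n:ℝ)) * (X * (1+X) * 0 + (C (n:ℝ) * X + C ((0:ℕ):ℝ)) * 1)).eval r = r
      simp
      field_simp
    rw [h1]
    have : 0 ≤ (r+2) * (((2:ℕ).factorial : ℕ) : ℝ) * r^0 / n := by positivity
    simp only [zero_add, pow_one] at *
    linarith
  | succ m ih =>
    have hstep := eval_step n (m+1) hn0 hr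
    have hpos : (0:ℝ) ≤ r + (m+1)*(r+2)/n := by positivity
    have hmul := mul_le_mul_of_nonneg_left ih hpos
    have hF1 : (1:ℝ) ≤ (((m+2).factorial : ℕ) : ℝ) := by
      exact_mod_cast Nat.one_le_iff_ne_zero.mpr (Nat.factorial_ne_zero _)
    have hmF : ((m:ℝ)+1) ≤ (((m+2).factorial : ℕ) : ℝ) := by
      have : m + 1 ≤ (m+2).factorial := le_trans (by omega) (Nat.self_le_factorial _)
      exact_mod_cast this
    have ht1 : (1:ℝ) ≤ r^m := one_le_pow₀ hr
    set F : ℝ := (((m+2).factorial : ℕ) : ℝ) with hF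
    have hfact : ((((m+3).factorial : ℕ) : ℝ)) = ((m:ℝ)+3) * F := by
      rw [hF]
      push_cast [Nat.factorial_succ]
      ring
    have key : F*r + ((m:ℝ)+1)*r + ((m:ℝ)+1)*(r+2)*F/n ≤ ((m:ℝ)+3)*F*r := by
      have h2 : ((m:ℝ)+1)*(r+2)*F/n ≤ ((m:ℝ)+1)*F := by
        rw [div_le_iff₀ hn0]
        nlinarith [mul_le_mul_of_nonneg_left hn (show (0:ℝ) ≤ ((m:ℝ)+1)*F by positivity)]
      nlinarith [mul_le_mul_of_nonneg_right hmF (show (0:ℝ) ≤ r by linarith),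
        mul_le_mul_of_nonneg_left hr (show (0:ℝ) ≤ ((m:ℝ)+1)*F by positivity)]
    have key2 := mul_le_mul_of_nonneg_right key
      (show (0:ℝ) ≤ (r+2)*r^m/n by positivity)
    push_cast at hstep
    calc (Qp n (m+1+1)).eval r
        ≤ (r + (m+1)*(r+2)/n) * (Qp n (m+1)).eval r := hstep
      _ ≤ (r + (m+1)*(r+2)/n) * (r^(m+1) + (r+2) * F * r^m / n) := hmul
      _ ≤ r^(m+1+1) + (r+2) * (((m+1+2).factorial : ℕ) : ℝ) * r^(m+1) / n := by
          have e3 : ((m:ℕ)+1+2) = (m+3) := by omega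
          rw [e3, hfact, pow_succ, pow_succ]
          push_cast
          ring_nf
          ring_nf at key2
          linarith [key2]

lemma abs_aeval_sub_le (p : Polynomial ℝ) (k : ℕ) (hdeg : p.natDegree ≤ k)
    (hpos : ∀ j, 0 ≤ p.coeff j) (htop : 1 ≤ p.coeff k) {r : ℝ} (hr0 : 0 ≤ r)
    (z : ℂ) (hz : ‖z‖ ≤ r) :
    ‖(aeval z p : ℂ) - z ^ k‖ ≤ p.eval r - r ^ k := by
  have hd : p.natDegree < k + 1 := by omega
  rw [aeval_eq_sum_range' hd z, eval_eq_sum_range' hd r]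
  have hsplit : (∑ i ∈ Finset.range (k+1), p.coeff i • z ^ i) - z ^ k
      = (∑ i ∈ Finset.range k, ((p.coeff i : ℂ)) * z ^ i)
        + (((p.coeff k : ℂ)) - 1) * z ^ k := by
    rw [Finset.sum_range_succ]
    simp only [Complex.real_smul]
    ring
  rw [hsplit, Finset.sum_range_succ]
  have habs : ∀ i, ‖(p.coeff i : ℂ) * z ^ i‖ ≤ p.coeff i * r ^ i := by
    intro i
    rw [norm_mul, norm_pow, Complex.norm_real, Real.norm_eq_abs, abs_of_nonneg (hpos i)]
    exact mul_le_mul_of_nonneg_left (pow_le_pow_left₀ (norm_nonneg z) hz i) (hpos i)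
  calc ‖(∑ i ∈ Finset.range k, ((p.coeff i : ℂ)) * z ^ i)
        + (((p.coeff k : ℂ)) - 1) * z ^ k‖
      ≤ ‖∑ i ∈ Finset.range k, ((p.coeff i : ℂ)) * z ^ i‖
        + ‖(((p.coeff k : ℂ)) - 1) * z ^ k‖ := norm_add_le _ _
    _ ≤ (∑ i ∈ Finset.range k, p.coeff i * r ^ i) + (p.coeff k - 1) * r ^ k := by
        refine add_le_add ((norm_sum_le _ _).trans
          (Finset.sum_le_sum fun i _ => habs i)) ?_
        rw [norm_mul, norm_pow]
        have : ((p.coeff k : ℂ)) - 1 = ((p.coeff k - 1 : ℝ) : ℂ) := by push_cast; ring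
        rw [this, Complex.norm_real, Real.norm_eq_abs, abs_of_nonneg (by linarith)]
        exact mul_le_mul_of_nonneg_left (pow_le_pow_left₀ (norm_nonneg z) hz k)
          (by linarith)
    _ = (∑ i ∈ Finset.range k, p.coeff i * r ^ i) + p.coeff k * r ^ k - r ^ k := by ring

/-- For `r ≥ 1`, `n ≥ r + 2` and `k ≥ 1`,
`sup_{|z| ≤ r} |T_{n,k}(z) − z^k| ≤ (r+2)·(k+1)!·r^{k−1}/n`. -/
theorem T_approx_monomial (r : ℝ) (hr : 1 ≤ r) (n : ℕ) (hn : r + 2 ≤ (n : ℝ)) (k : ℕ)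
    (hk : 1 ≤ k) (z : ℂ) (hz : ‖z‖ ≤ r) :
    ‖T n k z - z ^ k‖ ≤ (r + 2) * ((k + 1).factorial : ℝ) * r ^ (k - 1) / n := by
  obtain ⟨m, rfl⟩ : ∃ m, k = m + 1 := ⟨k - 1, by omega⟩
  have hn0 : (0:ℝ) < n := by linarith
  have hnnat : 0 < n := by exact_mod_cast hn0
  have hr0 : (0:ℝ) ≤ r := by linarith
  have h1 : ‖T n (m+1) z - z ^ (m+1)‖
      ≤ (Qp n (m+1)).eval r - r ^ (m+1) := by
    rw [T_eq_aeval]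
    exact abs_aeval_sub_le _ _ (Qp_natDegree_le n (m+1)) (Qp_coeff_nonneg n (m+1))
      (Qp_coeff_top n (m+1) hnnat) hr0 z hz
  have h2 := Qp_eval_bound r hr n hn m
  have e1 : (m + 1 + 1).factorial = (m + 2).factorial := by norm_num
  have e2 : (m + 1 - 1) = m := by omega
  rw [e1, e2]
  calc ‖T n (m+1) z - z ^ (m+1)‖ ≤ (Qp n (m+1)).eval r - r ^ (m+1) := h1
    _ ≤ (r + 2) * (((m+2).factorial : ℕ) : ℝ) * r ^ m / n := by linarith
    _ = (r + 2) * (((m+2).factorial) : ℝ) * r ^ m / n := by norm_num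
end

section
/- Let r ≥ 1 be a real number and n ∈ ℕ with n > r + 2. Then for every integer k with 2 ≤ k ≤ n + 1 and every z with |z| ≤ r, |T_{n,k}(z) − z^k − k(k−1)(z+2)z^{k−1}/(2n)| ≤ (k−1)(r+1)^k B_{k,r} / n², where B_{k,r} = (k−1)²(k−2)r² + 2(k−1)(k−2)(2k−3)(r+1) + (r+1)(r+2)·(k+1)!. -/
/-- `B_{k,r} = (k−1)²(k−2)r² + 2(k−1)(k−2)(2k−3)(r+1) + (r+1)(r+2)·(k+1)!`. -/
noncomputable def B (k : ℕ) (r : ℝ) : ℝ :=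
  ((k : ℝ) - 1) ^ 2 * ((k : ℝ) - 2) * r ^ 2
    + 2 * ((k : ℝ) - 1) * ((k : ℝ) - 2) * (2 * (k : ℝ) - 3) * (r + 1)
    + (r + 1) * (r + 2) * ((k + 1).factorial : ℝ)

open Polynomial Finset

/-! ### Auxiliary polynomial framework -/

noncomputable def Pn (n : ℕ) : ℕ → Polynomial ℂ
  | 0 => 1
  | k + 1 => C ((n : ℂ))⁻¹ * (X * (1 + X)) * derivative (Pn n k)
      + C ((n : ℂ))⁻¹ * (C (n : ℂ) * X + C (k : ℂ)) * Pn n k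

lemma Pn_succ (n k : ℕ) : Pn n (k+1) = C ((n : ℂ))⁻¹ * (X * (1 + X)) * derivative (Pn n k)
      + C ((n : ℂ))⁻¹ * (C (n : ℂ) * X + C (k : ℂ)) * Pn n k := rfl

lemma T_eq (n : ℕ) (k : ℕ) : T n k = fun z => (Pn n k).eval z := by
  induction k with
  | zero => funext z; simp [T, Pn]
  | succ k ih =>
      funext z
      simp only [T, Pn, ih, Polynomial.deriv, eval_add, eval_mul, eval_C, eval_X, eval_one]
      ring

lemma natDegree_Pn (n k : ℕ) : (Pn n k).natDegree ≤ k := by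
  induction k with
  | zero => simp [Pn]
  | succ k ih =>
      have hx : (X * (1 + X) : Polynomial ℂ).natDegree ≤ 2 :=
        le_trans natDegree_mul_le (by
          have : (1 + X : Polynomial ℂ).natDegree ≤ 1 :=
            le_trans (natDegree_add_le _ _) (by simp)
          simp; omega)
      have hl : (C ((n:ℂ))⁻¹ * (X * (1 + X))).natDegree ≤ 2 :=
        le_trans (natDegree_C_mul_le _ _) hx
      have hlin : (C ((n:ℂ))⁻¹ * (C (n:ℂ) * X + C (k:ℂ))).natDegree ≤ 1 := by
        refine le_trans (natDegree_C_mul_le _ _) (le_trans (natDegree_add_le _ _) ?_)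
        have h1 : (C (n:ℂ) * X).natDegree ≤ 1 := le_trans (natDegree_C_mul_le _ _) (by simp)
        exact max_le h1 (by simp)
      simp only [Pn]
      refine le_trans (natDegree_add_le _ _) (max_le ?_ ?_)
      · rcases Nat.eq_zero_or_pos k with hk | hk
        · subst hk
          have : derivative (Pn n 0) = 0 := by simp [Pn]
          simp [this]
        · have hd : (derivative (Pn n k)).natDegree ≤ k - 1 :=
            le_trans (natDegree_derivative_le _) (Nat.sub_le_sub_right ih 1)
          refine le_trans natDegree_mul_le ?_; omega
      · refine le_trans natDegree_mul_le ?_; omega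

/-! ### The weighted `ℓ¹` coefficient norm -/

noncomputable def Nr (r : ℝ) (p : Polynomial ℂ) : ℝ := p.sum fun i a => ‖a‖ * r ^ i

lemma Nr_eq_range (r : ℝ) (p : Polynomial ℂ) {m : ℕ} (hm : p.natDegree < m) :
    Nr r p = ∑ i ∈ range m, ‖p.coeff i‖ * r ^ i :=
  Polynomial.sum_over_range' p (by simp) m hm

lemma Nr_nonneg {r : ℝ} (hr : 0 ≤ r) (p : Polynomial ℂ) : 0 ≤ Nr r p := by
  rw [Nr_eq_range r p (Nat.lt_succ_self _)]
  exact Finset.sum_nonneg fun i _ => mul_nonneg (norm_nonneg _) (pow_nonneg hr _)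

lemma Nr_eval_le {r : ℝ} (hr : 0 ≤ r) (p : Polynomial ℂ) {z : ℂ} (hz : ‖z‖ ≤ r) :
    ‖p.eval z‖ ≤ Nr r p := by
  rw [Nr_eq_range r p (Nat.lt_succ_self _), eval_eq_sum_range]
  refine le_trans (norm_sum_le _ _) (Finset.sum_le_sum fun i _ => ?_)
  rw [norm_mul, norm_pow]
  exact mul_le_mul_of_nonneg_left (pow_le_pow_left₀ (norm_nonneg _) hz i) (norm_nonneg _)

lemma Nr_add_le {r : ℝ} (hr : 0 ≤ r) (p q : Polynomial ℂ) :
    Nr r (p + q) ≤ Nr r p + Nr r q := by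
  set m := max (max p.natDegree q.natDegree) (p+q).natDegree + 1 with hm
  have h1 : p.natDegree < m := by omega
  have h2 : q.natDegree < m := by omega
  have h3 : (p+q).natDegree < m := by omega
  rw [Nr_eq_range r p h1, Nr_eq_range r q h2, Nr_eq_range r _ h3, ← Finset.sum_add_distrib]
  refine Finset.sum_le_sum fun i _ => ?_
  rw [coeff_add, ← add_mul]
  exact mul_le_mul_of_nonneg_right (norm_add_le _ _) (pow_nonneg hr _)

lemma Nr_C_mul (r : ℝ) (a : ℂ) (p : Polynomial ℂ) : Nr r (C a * p) = ‖a‖ * Nr r p := by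
  have h : (C a * p).natDegree < p.natDegree + 1 :=
    Nat.lt_succ_of_le (natDegree_C_mul_le _ _)
  rw [Nr_eq_range r _ h, Nr_eq_range r p (Nat.lt_succ_self _), Finset.mul_sum]
  refine Finset.sum_congr rfl fun i _ => ?_
  rw [coeff_C_mul, norm_mul]; ring

lemma Nr_X_mul (r : ℝ) (p : Polynomial ℂ) : Nr r (X * p) = r * Nr r p := by
  have h : (X * p).natDegree < p.natDegree + 2 := by
    have := natDegree_mul_le (p := (X : Polynomial ℂ)) (q := p)
    simp at this; omega
  rw [Nr_eq_range r _ h, Nr_eq_range r p (Nat.lt_succ_self _), Finset.mul_sum,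
    Finset.sum_range_succ']
  simp only [coeff_X_mul]
  have h0 : ‖(X * p).coeff 0‖ * r ^ 0 = 0 := by
    simp [Polynomial.coeff_X_mul_zero]
  rw [h0, add_zero]
  refine Finset.sum_congr rfl fun i _ => by ring

lemma Nr_Xpow_mul (r : ℝ) (j : ℕ) (p : Polynomial ℂ) : Nr r (X ^ j * p) = r ^ j * Nr r p := by
  induction j generalizing p with
  | zero => simp
  | succ j ih => rw [pow_succ, mul_assoc, ih, Nr_X_mul]; ring

lemma Nr_one (r : ℝ) : Nr r 1 = 1 := by
  rw [Nr_eq_range r 1 (m := 1) (by simp)]; simp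

lemma Nr_C (r : ℝ) (a : ℂ) : Nr r (C a) = ‖a‖ := by
  rw [show (C a : ℂ[X]) = C a * 1 by ring, Nr_C_mul, Nr_one, mul_one]

lemma Nr_X (r : ℝ) : Nr r (X : ℂ[X]) = r := by
  rw [← mul_one (X : ℂ[X]), Nr_X_mul, Nr_one, mul_one]

lemma Nr_monomial (r : ℝ) (a : ℂ) (j : ℕ) : Nr r (C a * X ^ j) = ‖a‖ * r ^ j := by
  rw [show (C a * X ^ j : ℂ[X]) = C a * (X ^ j * 1) by ring, Nr_C_mul, Nr_Xpow_mul, Nr_one]; ring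

lemma Nr_derivative_le {r : ℝ} (hr : 0 < r) {p : Polynomial ℂ} {k : ℕ}
    (hp : p.natDegree ≤ k) : Nr r (derivative p) ≤ (k / r) * Nr r p := by
  have hd : (derivative p).natDegree < k + 1 :=
    Nat.lt_succ_of_le (le_trans (natDegree_derivative_le p) (le_trans (Nat.sub_le _ _) hp))
  rw [Nr_eq_range r _ hd, Nr_eq_range r p (Nat.lt_succ_of_le (le_trans hp (Nat.le_succ _)))]
  have key : ∀ i ∈ range (k+1), ‖(derivative p).coeff i‖ * r ^ i
      ≤ (k / r) * (‖p.coeff (i+1)‖ * r ^ (i+1)) := by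
    intro i hi
    rw [coeff_derivative, norm_mul]
    rcases eq_or_ne (p.coeff (i+1)) 0 with h | h
    · simp [h]
    · have hik : i + 1 ≤ k := le_trans (le_natDegree_of_ne_zero h) hp
      have hn : ‖((i : ℂ) + 1)‖ = (i : ℝ) + 1 := by
        rw [show ((i:ℂ)+1) = ((i+1 : ℕ) : ℂ) by push_cast; ring, Complex.norm_natCast]
        push_cast; ring
      rw [hn, pow_succ, div_mul_eq_mul_div, le_div_iff₀ hr]
      have h1 : 0 ≤ ‖p.coeff (i+1)‖ * r ^ i := by positivity
      have hik' : ((i:ℝ)+1) ≤ (k:ℝ) := by exact_mod_cast hik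
      nlinarith [mul_nonneg (mul_nonneg (sub_nonneg.2 hik') h1) hr.le]
  refine le_trans (Finset.sum_le_sum key) ?_
  rw [← Finset.mul_sum]
  have h0 : 0 ≤ ‖p.coeff 0‖ * r ^ 0 := by positivity
  have hk0 : 0 ≤ (k:ℝ)/r := by positivity
  refine mul_le_mul_of_nonneg_left ?_ hk0
  rw [Finset.sum_range_succ' (fun i => ‖p.coeff i‖ * r ^ i) (k+1)]
  exact le_add_of_nonneg_right h0

/-! ### The error polynomials and their recursion -/

noncomputable def en (n k : ℕ) : Polynomial ℂ :=
  Pn n k - X ^ k - C ((k:ℂ) * ((k:ℂ) - 1) / (2 * (n:ℂ))) * ((X + C 2) * X ^ (k-1))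

noncomputable def Rk (n k : ℕ) : Polynomial ℂ :=
  C ((k:ℂ) * ((k:ℂ) - 1) / (2 * (n:ℂ)^2)) *
    (C ((k:ℂ) - 1) * ((1 + X) * ((X + C 2) * X ^ (k-1)))
      + (1 + X) * X ^ k + C (k:ℂ) * ((X + C 2) * X ^ (k-1)))

lemma en_two (n : ℕ) (hn : (n:ℂ) ≠ 0) : en n 2 = 0 := by
  apply Polynomial.funext
  intro z
  have h1 : Pn n 1 = C ((n : ℂ))⁻¹ * (C (n : ℂ) * X) := by
    rw [show (1:ℕ) = 0 + 1 from rfl, Pn_succ]; simp [Pn]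
  simp only [en]
  rw [show (2:ℕ) = 1 + 1 from rfl, Pn_succ, h1]
  simp only [derivative_mul, derivative_C, derivative_X, eval_add, eval_mul, eval_sub,
    eval_pow, eval_C, eval_X, eval_one, eval_zero, derivative_one]
  push_cast
  field_simp
  ring

lemma en_rec (n : ℕ) (hn : (n:ℂ) ≠ 0) (j : ℕ) :
    en n (j+3) = C ((n:ℂ))⁻¹ * (X * (1 + X)) * derivative (en n (j+2))
      + C ((n:ℂ))⁻¹ * (C (n:ℂ) * X + C ((j+2 : ℕ):ℂ)) * en n (j+2) + Rk n (j+2) := by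
  apply Polynomial.funext
  intro z
  simp only [en, Rk, show j + 3 - 1 = j + 2 from rfl, show j + 2 - 1 = j + 1 from rfl]
  rw [show j + 3 = (j + 2) + 1 from rfl, Pn_succ]
  simp only [derivative_sub, derivative_add, derivative_mul, derivative_C, derivative_X,
    derivative_X_pow, derivative_one, show j + 2 - 1 = j + 1 from rfl,
    eval_add, eval_mul, eval_sub, eval_pow, eval_C, eval_X, eval_one, eval_zero]
  push_cast
  field_simp
  ring

lemma natDegree_en (n : ℕ) (j : ℕ) : (en n (j+2)).natDegree ≤ j + 2 := by
  unfold en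
  refine le_trans (natDegree_sub_le _ _) (max_le (le_trans (natDegree_sub_le _ _)
    (max_le (natDegree_Pn n _) (by simp))) ?_)
  refine le_trans (natDegree_C_mul_le _ _) (le_trans natDegree_mul_le ?_)
  have h1 : (X + C (2:ℂ)).natDegree ≤ 1 :=
    le_trans (natDegree_add_le _ _) (by simp)
  have h2 : (X ^ (j+2-1) : ℂ[X]).natDegree ≤ j + 1 := by
    rw [natDegree_X_pow]; omega
  omega

/-! ### Numeric lemmas -/

lemma fact_lb (m : ℕ) : ((m+5).factorial : ℝ) ≥ ((m:ℝ)+5)*((m:ℝ)+4)*((m:ℝ)+3)*((m:ℝ)+2) := by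
  have h : (m+5).factorial = (m+5)*((m+4)*((m+3)*((m+2)*(m+1).factorial))) := by
    rw [show m+5=(m+4)+1 from rfl, Nat.factorial_succ, show m+4=(m+3)+1 from rfl,
      Nat.factorial_succ, show m+3=(m+2)+1 from rfl, Nat.factorial_succ,
      show m+2=(m+1)+1 from rfl, Nat.factorial_succ]
  have h1 : 1 ≤ (m+1).factorial := Nat.one_le_iff_ne_zero.2 (Nat.factorial_ne_zero _)
  have h2 : (m+5)*((m+4)*((m+3)*((m+2)*1))) ≤ (m+5).factorial := by
    rw [h]; gcongr
  calc ((m:ℝ)+5)*((m:ℝ)+4)*((m:ℝ)+3)*((m:ℝ)+2)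
      = ((m+5)*((m+4)*((m+3)*((m+2)*1))) : ℕ) := by push_cast; ring
    _ ≤ ((m+5).factorial : ℝ) := by exact_mod_cast h2

lemma fact_ineq (k : ℕ) (hk : 2 ≤ k) :
    2*((k:ℝ)-1)*(((k:ℝ)-1)^2*((k:ℝ)-2) + 2*((k:ℝ)-1)*((k:ℝ)-2)*(2*(k:ℝ)-3)) + (k:ℝ)^2*((k:ℝ)-1)
    ≤ ((k+1).factorial:ℝ)*((k:ℝ)^2+2) := by
  match k, hk with
  | 2, _ => norm_num [Nat.factorial]
  | 3, _ => norm_num [Nat.factorial]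
  | (m+4), _ =>
    have hf := fact_lb m
    have hm : (0:ℝ) ≤ (m:ℝ) := Nat.cast_nonneg m
    rw [show m+4+1 = m+5 from rfl]
    push_cast
    nlinarith [mul_nonneg hm hm, mul_nonneg (mul_nonneg hm hm) hm,
      mul_nonneg (mul_nonneg (mul_nonneg hm hm) hm) hm,
      mul_nonneg (mul_nonneg (mul_nonneg (mul_nonneg hm hm) hm) hm) hm,
      mul_nonneg (mul_nonneg (mul_nonneg (mul_nonneg (mul_nonneg hm hm) hm) hm) hm) hm,
      mul_le_mul_of_nonneg_right hf (by nlinarith : (0:ℝ) ≤ ((m:ℝ)+4)^2+2)]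

lemma B_nonneg {k : ℕ} (hk : 2 ≤ k) {r : ℝ} (hr : 1 ≤ r) : 0 ≤ B k r := by
  have h2 : (2:ℝ) ≤ (k:ℝ) := by exact_mod_cast hk
  have hf : (0:ℝ) ≤ ((k+1).factorial : ℝ) := Nat.cast_nonneg _
  have ha : 0 ≤ ((k:ℝ)-1)^2*((k:ℝ)-2)*r^2 :=
    mul_nonneg (mul_nonneg (sq_nonneg _) (by linarith)) (sq_nonneg r)
  have hb : 0 ≤ 2*((k:ℝ)-1)*((k:ℝ)-2)*(2*(k:ℝ)-3)*(r+1) :=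
    mul_nonneg (mul_nonneg (mul_nonneg (mul_nonneg (by norm_num) (by linarith)) (by linarith))
      (by linarith)) (by linarith)
  have hc : 0 ≤ (r+1)*(r+2)*((k+1).factorial : ℝ) :=
    mul_nonneg (mul_nonneg (by linarith) (by linarith)) hf
  unfold B; linarith

lemma star_abstract (r K A Bc A' Bc' F : ℝ) (hr : 1 ≤ r) (hK : 2 ≤ K) (hF : 1 ≤ F)
    (hA : 0 ≤ A) (hB : 0 ≤ Bc) (hA' : 0 ≤ A') (hB' : 0 ≤ Bc')
    (hdag : 2*(K-1)*(A+Bc) + K^2*(K-1) ≤ F*(K^2+2)) :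
    2*(K-1)*(r+1)*(A*r^2+Bc*(r+1)+(r+1)*(r+2)*F) + K^2*(K-1)*(r+2)
      ≤ K*(r+1)*(A'*r^2+Bc'*(r+1)+(r+1)*(r+2)*(K+2)*F) := by
  have e1 : A*r^2 ≤ A*((r+1)*(r+2)) := by nlinarith
  have e2 : Bc*(r+1) ≤ Bc*((r+1)*(r+2)) := by nlinarith
  have hsum : A*r^2 + Bc*(r+1) ≤ (r+1)*(r+2)*(A+Bc) := by nlinarith
  have hc : (0:ℝ) ≤ 2*(K-1)*(r+1) := by nlinarith
  have h5 := mul_le_mul_of_nonneg_left hsum hc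
  have h6 : (0:ℝ) ≤ K*(r+1)*(A'*r^2 + Bc'*(r+1)) := by
    have := mul_nonneg hA' (sq_nonneg r)
    have := mul_nonneg hB' (by linarith : (0:ℝ) ≤ r+1)
    have : (0:ℝ) ≤ A'*r^2 + Bc'*(r+1) := by linarith
    exact mul_nonneg (mul_nonneg (by linarith) (by linarith)) this
  have h7 := mul_le_mul_of_nonneg_left
    (show 2*(K-1)*(A+Bc) + 2*(K-1)*F + K^2*(K-1) ≤ K*(K+2)*F by nlinarith [hdag])
    (show (0:ℝ) ≤ (r+1)^2*(r+2) by nlinarith)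
  have h8 : K^2*(K-1)*(r+2) ≤ (r+1)^2*(r+2)*(K^2*(K-1)) := by
    have hx : (0:ℝ) ≤ K^2*(K-1) := mul_nonneg (sq_nonneg _) (by linarith)
    nlinarith [mul_nonneg hx (show (0:ℝ) ≤ r+2 by linarith)]
  nlinarith [h5, h6, h7, h8]

lemma star_ineq (r : ℝ) (hr : 1 ≤ r) (k : ℕ) (hk : 2 ≤ k) :
    2*((k:ℝ)-1)*(r+1)*(B k r) + (k:ℝ)^2*((k:ℝ)-1)*(r+2) ≤ (k:ℝ)*(r+1)*(B (k+1) r) := by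
  have h2 : (2:ℝ) ≤ (k:ℝ) := by exact_mod_cast hk
  have hF : ((k+1+1).factorial : ℝ) = ((k:ℝ)+2) * ((k+1).factorial : ℝ) := by
    rw [Nat.factorial_succ]; push_cast; ring
  have hf1 : (1:ℝ) ≤ ((k+1).factorial : ℝ) := by
    exact_mod_cast Nat.one_le_iff_ne_zero.2 (Nat.factorial_ne_zero _)
  have key := star_abstract r (k:ℝ) (((k:ℝ)-1)^2*((k:ℝ)-2)) (2*((k:ℝ)-1)*((k:ℝ)-2)*(2*(k:ℝ)-3))
    (((k:ℝ)+1-1)^2*((k:ℝ)+1-2)) (2*((k:ℝ)+1-1)*((k:ℝ)+1-2)*(2*((k:ℝ)+1)-3))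
    ((k+1).factorial : ℝ) hr h2 hf1
    (mul_nonneg (sq_nonneg _) (by linarith))
    (mul_nonneg (mul_nonneg (mul_nonneg (by norm_num) (by linarith)) (by linarith)) (by linarith))
    (mul_nonneg (sq_nonneg _) (by linarith))
    (mul_nonneg (mul_nonneg (mul_nonneg (by norm_num) (by linarith)) (by linarith)) (by linarith))
    (by nlinarith [fact_ineq k hk])
  unfold B
  push_cast
  rw [hF]
  nlinarith [key]

lemma num_ineq (r : ℝ) (hr : 1 ≤ r) (n j : ℕ) (hn : r + 2 < (n:ℝ)) (hkn : j + 2 ≤ n) :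
    ((1+r)*((j:ℝ)+2)/n + (r + ((j:ℝ)+2)/n)) * (((j:ℝ)+1)*(r+1)^(j+2) * B (j+2) r / (n:ℝ)^2)
      + (((j:ℝ)+2)*((j:ℝ)+1)/(2*(n:ℝ)^2)) * (((j:ℝ)+1)*(1+r)*(r+2)*r^(j+1)
        + (1+r)*r^(j+2) + ((j:ℝ)+2)*(r+2)*r^(j+1))
    ≤ ((j:ℝ)+2) * (r+1)^(j+3) * B (j+3) r / (n:ℝ)^2 := by
  have hn0 : (0:ℝ) < n := by linarith
  have hjn : ((j:ℝ)+2) ≤ (n:ℝ) := by exact_mod_cast hkn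
  have hBk : 0 ≤ B (j+2) r := B_nonneg (by omega) hr
  -- step 1: coefficient bound
  have hA : (1+r)*((j:ℝ)+2)/n + (r + ((j:ℝ)+2)/n) ≤ 2*(r+1) := by
    have h1 : ((j:ℝ)+2)/n ≤ 1 := by rw [div_le_one hn0]; exact hjn
    have h2 : (1+r)*((j:ℝ)+2)/n ≤ (1+r)*1 := by
      rw [mul_div_assoc]
      exact mul_le_mul_of_nonneg_left h1 (by linarith)
    linarith
  -- step 2: rho bound
  have hr0 : (0:ℝ) ≤ r := by linarith
  have hp1 : r^(j+1) ≤ (r+1)^(j+1) := pow_le_pow_left₀ hr0 (by linarith) _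
  have hp2 : r^(j+2) ≤ (r+1)^(j+2) := pow_le_pow_left₀ hr0 (by linarith) _
  have hq1 : (r+1)^(j+1) * (r+1) = (r+1)^(j+2) := by rw [← pow_succ]
  have hq0 : (0:ℝ) < (r+1)^(j+1) := by positivity
  have hrho : ((j:ℝ)+1)*(1+r)*(r+2)*r^(j+1) + (1+r)*r^(j+2) + ((j:ℝ)+2)*(r+2)*r^(j+1)
      ≤ 2*((j:ℝ)+2)*(r+2)*(r+1)^(j+2) := by
    have ht1 : ((j:ℝ)+1)*(1+r)*(r+2)*r^(j+1) ≤ ((j:ℝ)+1)*(r+2)*(r+1)^(j+2) := by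
      rw [← hq1]
      nlinarith [mul_le_mul_of_nonneg_left hp1
        (show (0:ℝ) ≤ ((j:ℝ)+1)*(1+r)*(r+2) by positivity), hq0.le]
    have ht2 : (1+r)*r^(j+2) ≤ (r+2)*(r+1)^(j+2) := by
      nlinarith [mul_le_mul_of_nonneg_left hp2 (show (0:ℝ) ≤ 1+r by linarith),
        pow_nonneg (show (0:ℝ) ≤ r+1 by linarith) (j+2)]
    have ht3 : ((j:ℝ)+2)*(r+2)*r^(j+1) ≤ ((j:ℝ)+2)*(r+2)*(r+1)^(j+2) := by
      have : r^(j+1) ≤ (r+1)^(j+2) :=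
        le_trans hp1 (pow_le_pow_right₀ (by linarith) (by omega))
      exact mul_le_mul_of_nonneg_left this (by positivity)
    linarith
  -- assemble
  have hX : (0:ℝ) ≤ (r+1)^(j+2) / (n:ℝ)^2 := by positivity
  have hC : (0:ℝ) ≤ ((j:ℝ)+1)*(r+1)^(j+2) * B (j+2) r / (n:ℝ)^2 := by positivity
  have h1 := mul_le_mul_of_nonneg_right hA hC
  have hcoef : (0:ℝ) ≤ ((j:ℝ)+2)*((j:ℝ)+1)/(2*(n:ℝ)^2) := by positivity
  have h2 := mul_le_mul_of_nonneg_left hrho hcoef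
  have hstar := star_ineq r hr (j+2) (by omega)
  rw [show j+2+1 = j+3 from rfl] at hstar
  push_cast at hstar
  have h3 := mul_le_mul_of_nonneg_right hstar hX
  have e1 : 2*(r+1) * (((j:ℝ)+1)*(r+1)^(j+2) * B (j+2) r / (n:ℝ)^2)
      = (2*(((j:ℝ)+2)-1)*(r+1)*(B (j+2) r)) * ((r+1)^(j+2) / (n:ℝ)^2) := by
    field_simp; ring
  have e2 : (((j:ℝ)+2)*((j:ℝ)+1)/(2*(n:ℝ)^2)) * (2*((j:ℝ)+2)*(r+2)*(r+1)^(j+2))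
      = (((j:ℝ)+2)^2*(((j:ℝ)+2)-1)*(r+2)) * ((r+1)^(j+2) / (n:ℝ)^2) := by
    field_simp; ring
  have e3 : (((j:ℝ)+2)*(r+1)*(B (j+3) r)) * ((r+1)^(j+2) / (n:ℝ)^2)
      = ((j:ℝ)+2) * (r+1)^(j+3) * B (j+3) r / (n:ℝ)^2 := by
    rw [show j+3 = (j+2)+1 from rfl, pow_succ]
    field_simp; ring
  calc ((1+r)*((j:ℝ)+2)/n + (r + ((j:ℝ)+2)/n)) * (((j:ℝ)+1)*(r+1)^(j+2) * B (j+2) r / (n:ℝ)^2)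
      + (((j:ℝ)+2)*((j:ℝ)+1)/(2*(n:ℝ)^2)) * (((j:ℝ)+1)*(1+r)*(r+2)*r^(j+1)
        + (1+r)*r^(j+2) + ((j:ℝ)+2)*(r+2)*r^(j+1))
      ≤ 2*(r+1) * (((j:ℝ)+1)*(r+1)^(j+2) * B (j+2) r / (n:ℝ)^2)
        + (((j:ℝ)+2)*((j:ℝ)+1)/(2*(n:ℝ)^2)) * (2*((j:ℝ)+2)*(r+2)*(r+1)^(j+2)) :=
        add_le_add h1 h2
    _ = (2*(((j:ℝ)+2)-1)*(r+1)*(B (j+2) r) + ((j:ℝ)+2)^2*(((j:ℝ)+2)-1)*(r+2))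
        * ((r+1)^(j+2) / (n:ℝ)^2) := by rw [e1, e2]; ring
    _ ≤ (((j:ℝ)+2)*(r+1)*(B (j+3) r)) * ((r+1)^(j+2) / (n:ℝ)^2) := h3
    _ = ((j:ℝ)+2) * (r+1)^(j+3) * B (j+3) r / (n:ℝ)^2 := e3


/-! ### Bounds on the remainder and the induction step -/

lemma Nr_quad (r : ℝ) (hr : 1 ≤ r) : Nr r ((1+X)*(X+C 2) : ℂ[X]) ≤ (r+1)*(r+2) := by
  have h32 : (C 3 : ℂ[X]) = C 2 + C 1 := by rw [← C_add]; norm_num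
  have hid : ((1+X)*(X+C 2) : ℂ[X]) = C 2 + (C 3 * X^1 + C 1 * X^2) := by
    rw [h32, C_1]; ring
  rw [hid]
  refine le_trans (Nr_add_le (by linarith) _ _) ?_
  refine le_trans (add_le_add le_rfl (Nr_add_le (by linarith) _ _)) ?_
  rw [Nr_C, Nr_monomial, Nr_monomial]
  have n1 : ‖(1:ℂ)‖ = 1 := by norm_num
  have n2 : ‖(2:ℂ)‖ = 2 := by norm_num
  have n3 : ‖(3:ℂ)‖ = 3 := by norm_num
  rw [n1, n2, n3]
  nlinarith

lemma Nr_lin1 (r : ℝ) (hr : 1 ≤ r) : Nr r ((1+X) : ℂ[X]) ≤ 1 + r := by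
  refine le_trans (Nr_add_le (by linarith) _ _) ?_
  rw [Nr_one, Nr_X]

lemma Nr_lin2 (r : ℝ) (hr : 1 ≤ r) : Nr r ((X + C 2) : ℂ[X]) ≤ r + 2 := by
  refine le_trans (Nr_add_le (by linarith) _ _) ?_
  rw [Nr_X, Nr_C]
  have n2 : ‖(2:ℂ)‖ = 2 := by norm_num
  rw [n2]

lemma Nr_W1 (r : ℝ) (hr : 1 ≤ r) (m : ℕ) :
    Nr r ((1 + X) * ((X + C 2) * X ^ m) : ℂ[X]) ≤ (r+1)*(r+2)*r^m := by
  have hid : ((1 + X) * ((X + C 2) * X ^ m) : ℂ[X]) = X^m * ((1+X)*(X+C 2)) := by ring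
  rw [hid, Nr_Xpow_mul]
  have := mul_le_mul_of_nonneg_left (Nr_quad r hr) (show (0:ℝ) ≤ r^m by positivity)
  linarith

lemma Nr_W2 (r : ℝ) (hr : 1 ≤ r) (m : ℕ) :
    Nr r ((1 + X) * X ^ m : ℂ[X]) ≤ (1+r)*r^m := by
  have hid : ((1 + X) * X ^ m : ℂ[X]) = X^m * (1+X) := by ring
  rw [hid, Nr_Xpow_mul]
  have := mul_le_mul_of_nonneg_left (Nr_lin1 r hr) (show (0:ℝ) ≤ r^m by positivity)
  linarith

lemma Nr_W3 (r : ℝ) (hr : 1 ≤ r) (m : ℕ) :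
    Nr r ((X + C 2) * X ^ m : ℂ[X]) ≤ (r+2)*r^m := by
  have hid : ((X + C 2) * X ^ m : ℂ[X]) = X^m * (X + C 2) := by ring
  rw [hid, Nr_Xpow_mul]
  have := mul_le_mul_of_nonneg_left (Nr_lin2 r hr) (show (0:ℝ) ≤ r^m by positivity)
  linarith

lemma norm_real_coe (x : ℝ) (hx : 0 ≤ x) : ‖((x:ℝ):ℂ)‖ = x := by
  rw [Complex.norm_real, Real.norm_eq_abs, abs_of_nonneg hx]

lemma Nr_Rk (r : ℝ) (hr : 1 ≤ r) (n j : ℕ) :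
    Nr r (Rk n (j+2)) ≤ (((j:ℝ)+2)*((j:ℝ)+1)/(2*(n:ℝ)^2)) * (((j:ℝ)+1)*(1+r)*(r+2)*r^(j+1)
      + (1+r)*r^(j+2) + ((j:ℝ)+2)*(r+2)*r^(j+1)) := by
  unfold Rk
  rw [show j+2-1 = j+1 from rfl, Nr_C_mul]
  have hnorm : ‖((j+2:ℕ):ℂ) * (((j+2:ℕ):ℂ) - 1) / (2*(n:ℂ)^2)‖
      = ((j:ℝ)+2)*((j:ℝ)+1)/(2*(n:ℝ)^2) := by
    rw [show ((j+2:ℕ):ℂ) * (((j+2:ℕ):ℂ) - 1) / (2*(n:ℂ)^2)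
      = (((((j:ℝ)+2)*((j:ℝ)+1)/(2*(n:ℝ)^2)):ℝ):ℂ) by push_cast; ring]
    exact norm_real_coe _ (by positivity)
  rw [hnorm]
  refine mul_le_mul_of_nonneg_left ?_ (by positivity)
  refine le_trans (Nr_add_le (by linarith) _ _) ?_
  refine le_trans (add_le_add (Nr_add_le (by linarith) _ _) le_rfl) ?_
  rw [Nr_C_mul, Nr_C_mul]
  have hn1 : ‖((j+2:ℕ):ℂ) - 1‖ = (j:ℝ)+1 := by
    rw [show ((j+2:ℕ):ℂ)-1 = ((((j:ℝ)+1):ℝ):ℂ) by push_cast; ring]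
    exact norm_real_coe _ (by positivity)
  have hn2 : ‖((j+2:ℕ):ℂ)‖ = (j:ℝ)+2 := by
    rw [show ((j+2:ℕ):ℂ) = ((((j:ℝ)+2):ℝ):ℂ) by push_cast; ring]
    exact norm_real_coe _ (by positivity)
  rw [hn1, hn2]
  have b1 := mul_le_mul_of_nonneg_left (Nr_W1 r hr (j+1)) (show (0:ℝ) ≤ (j:ℝ)+1 by positivity)
  have b2 := Nr_W2 r hr (j+2)
  have b3 := mul_le_mul_of_nonneg_left (Nr_W3 r hr (j+1)) (show (0:ℝ) ≤ (j:ℝ)+2 by positivity)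
  linarith

lemma step_bound (r : ℝ) (hr : 1 ≤ r) (n j : ℕ) (hn : (n:ℂ) ≠ 0) :
    Nr r (en n (j+3)) ≤ ((1+r)*((j:ℝ)+2)/n + (r + ((j:ℝ)+2)/n)) * Nr r (en n (j+2))
      + (((j:ℝ)+2)*((j:ℝ)+1)/(2*(n:ℝ)^2)) * (((j:ℝ)+1)*(1+r)*(r+2)*r^(j+1)
        + (1+r)*r^(j+2) + ((j:ℝ)+2)*(r+2)*r^(j+1)) := by
  have hr0 : (0:ℝ) < r := by linarith
  have hnR : ((n:ℝ)) ≠ 0 := by exact_mod_cast hn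
  set E := en n (j+2) with hE
  have hNE : 0 ≤ Nr r E := Nr_nonneg (by linarith) _
  have hD : Nr r (derivative E) ≤ (((j+2:ℕ):ℝ)/r) * Nr r E :=
    Nr_derivative_le hr0 (natDegree_en n j)
  push_cast at hD
  have hND : 0 ≤ Nr r (derivative E) := Nr_nonneg (by linarith) _
  have hT1 : Nr r (C ((n:ℂ))⁻¹ * (X * (1 + X)) * derivative E)
      ≤ (1+r)*((j:ℝ)+2)/n * Nr r E := by
    have hid : C ((n:ℂ))⁻¹ * (X * (1 + X)) * derivative E
        = C ((n:ℂ))⁻¹ * (X * derivative E + X^2 * derivative E) := by ring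
    rw [hid, Nr_C_mul]
    have hnn : ‖((n:ℂ))⁻¹‖ = ((n:ℝ))⁻¹ := by rw [norm_inv, Complex.norm_natCast]
    rw [hnn]
    have h2 : Nr r (X * derivative E + X^2 * derivative E)
        ≤ (r + r^2) * Nr r (derivative E) := by
      refine le_trans (Nr_add_le (by linarith) _ _) ?_
      rw [Nr_X_mul, Nr_Xpow_mul]
      linarith
    have h3 : (r + r^2) * Nr r (derivative E) ≤ (r + r^2) * ((((j:ℝ)+2)/r) * Nr r E) :=
      mul_le_mul_of_nonneg_left hD (by positivity)
    have h4 : (n:ℝ)⁻¹ * ((r + r^2) * ((((j:ℝ)+2)/r) * Nr r E))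
        = (1+r)*((j:ℝ)+2)/n * Nr r E := by
      field_simp
    calc ((n:ℝ))⁻¹ * Nr r (X * derivative E + X^2 * derivative E)
        ≤ ((n:ℝ))⁻¹ * ((r + r^2) * ((((j:ℝ)+2)/r) * Nr r E)) := by
          apply mul_le_mul_of_nonneg_left (le_trans h2 h3) (by positivity)
      _ = (1+r)*((j:ℝ)+2)/n * Nr r E := h4
  have hT2 : Nr r (C ((n:ℂ))⁻¹ * (C (n:ℂ) * X + C ((j+2:ℕ):ℂ)) * E)
      ≤ (r + ((j:ℝ)+2)/n) * Nr r E := by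
    have hid : C ((n:ℂ))⁻¹ * (C (n:ℂ) * X + C ((j+2:ℕ):ℂ)) * E
        = C ((n:ℂ)⁻¹ * (n:ℂ)) * (X * E) + C ((n:ℂ)⁻¹ * ((j+2:ℕ):ℂ)) * E := by
      rw [C_mul, C_mul]; ring
    rw [hid, inv_mul_cancel₀ hn, map_one, one_mul]
    refine le_trans (Nr_add_le (by linarith) _ _) ?_
    rw [Nr_X_mul, Nr_C_mul]
    have hno : ‖(n:ℂ)⁻¹ * ((j+2:ℕ):ℂ)‖ = ((j:ℝ)+2)/n := by
      rw [norm_mul, norm_inv, Complex.norm_natCast, Complex.norm_natCast]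
      push_cast
      ring
    rw [hno]
    apply le_of_eq
    ring
  rw [en_rec n hn j]
  refine le_trans (Nr_add_le (by linarith) _ _) ?_
  refine le_trans (add_le_add (Nr_add_le (by linarith) _ _) (Nr_Rk r hr n j)) ?_
  rw [← hE]
  linarith [hT1, hT2]

lemma key_bound (r : ℝ) (hr : 1 ≤ r) (n : ℕ) (hn : r + 2 < (n:ℝ)) :
    ∀ k, 2 ≤ k → k ≤ n + 1 → Nr r (en n k) ≤ ((k:ℝ)-1) * (r+1)^k * B k r / (n:ℝ)^2 := by
  have hn0 : (0:ℝ) < n := by linarith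
  have hnn : 0 < n := by exact_mod_cast hn0
  have hnC : (n:ℂ) ≠ 0 := Nat.cast_ne_zero.2 hnn.ne'
  intro k hk
  induction k, hk using Nat.le_induction with
  | base =>
      intro _
      rw [en_two n hnC]
      have h0 : Nr r (0 : ℂ[X]) = 0 := by simp [Nr]
      rw [h0]
      have hB := B_nonneg (le_refl 2) hr
      have h1 : (0:ℝ) ≤ ((2:ℕ):ℝ)-1 := by norm_num
      exact div_nonneg (mul_nonneg (mul_nonneg h1 (by positivity)) hB) (by positivity)
  | succ k hk2 ih =>
      intro hk1
      obtain ⟨j, rfl⟩ : ∃ j, k = j + 2 := ⟨k - 2, by omega⟩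
      have hkn : j + 2 ≤ n := by omega
      have hih := ih (by omega)
      have hstep := step_bound r hr n j hnC
      have hnum := num_ineq r hr n j hn hkn
      have hcoef : 0 ≤ (1+r)*((j:ℝ)+2)/n + (r + ((j:ℝ)+2)/n) := by positivity
      have h4 := mul_le_mul_of_nonneg_left hih hcoef
      rw [show j+2+1 = j+3 from rfl]
      push_cast at h4 ⊢
      have hglue : ((1+r)*((j:ℝ)+2)/n + (r + ((j:ℝ)+2)/n))
            * (((j:ℝ)+2-1)*(r+1)^(j+2) * B (j+2) r / (n:ℝ)^2)
          = ((1+r)*((j:ℝ)+2)/n + (r + ((j:ℝ)+2)/n))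
            * (((j:ℝ)+1)*(r+1)^(j+2) * B (j+2) r / (n:ℝ)^2) := by ring
      have hglue2 : ((j:ℝ)+3-1)*(r+1)^(j+3) * B (j+3) r / (n:ℝ)^2
          = ((j:ℝ)+2)*(r+1)^(j+3) * B (j+3) r / (n:ℝ)^2 := by ring
      rw [hglue2]
      rw [hglue] at h4
      exact le_trans hstep (le_trans (add_le_add h4 le_rfl) hnum)

/-- For `r ≥ 1`, `n > r + 2`, `2 ≤ k ≤ n + 1` and `|z| ≤ r`,
`|T_{n,k}(z) − z^k − k(k−1)(z+2)z^{k−1}/(2n)| ≤ (k−1)(r+1)^k B_{k,r} / n²`. -/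
theorem T_voronovskaja_estimate (r : ℝ) (hr : 1 ≤ r) (n : ℕ) (hn : r + 2 < (n : ℝ))
    (k : ℕ) (hk₂ : 2 ≤ k) (hkn : k ≤ n + 1) (z : ℂ) (hz : ‖z‖ ≤ r) :
    ‖T n k z - z ^ k
        - (k : ℂ) * ((k : ℂ) - 1) * (z + 2) * z ^ (k - 1) / (2 * (n : ℂ))‖
      ≤ ((k : ℝ) - 1) * (r + 1) ^ k * B k r / (n : ℝ) ^ 2 := by
  have heq : T n k z - z ^ k - (k:ℂ)*((k:ℂ)-1)*(z+2)*z^(k-1)/(2*(n:ℂ)) = (en n k).eval z := by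
    simp only [T_eq, en, eval_sub, eval_mul, eval_add, eval_pow, eval_C, eval_X]
    ring
  rw [heq]
  have hz' : ‖z‖ ≤ r := hz
  exact le_trans (Nr_eval_le (by linarith) _ hz') (key_bound r hr n hn k hk₂ hkn)
end
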